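/- arXiv:1405.7498 — 5 statements merged into one kernel-verified Lean document; each statement's English description precedes it below -/
import Mathlib

section
/- The Randić incidence energy of the star S_n on n ≥ 2 vertices equals n - 2 + √2. -/
open Matrix BigOperators

attribute [local instance] Classical.propDecidable

noncomputable section

/-- The Randić incidence matrix of `G`. -/
def randicIncidence {V : Type} [Fintype V] (G : SimpleGraph V) :
    Matrix V G.edgeSet ℝ :=
  fun v e => if v ∈ (e : Sym2 V) then (Real.sqrt (G.degree v))⁻¹ else 0

/-- The singular values of the Randić incidence matrix of `G`, indexed by `V`. -/
def randicSingularValues {V : Type} [Fintype V] (G : SimpleGraph V) : V → ℝ :=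
  fun i => Real.sqrt
    ((Matrix.isHermitian_mul_conjTranspose_self (randicIncidence G)).eigenvalues i)

/-- The Randić incidence energy: the sum of the singular values. -/
def randicIncidenceEnergy {V : Type} [Fintype V] (G : SimpleGraph V) : ℝ :=
  ∑ i, randicSingularValues G i

/-- The star graph on `Fin n`, with center the vertex `0`. -/
def starGraph (n : ℕ) : SimpleGraph (Fin n) where
  Adj i j := i ≠ j ∧ (i.val = 0 ∨ j.val = 0)
  symm := ⟨fun i j h => ⟨h.1.symm, h.2.symm⟩⟩
  loopless := ⟨fun i h => h.1 rfl⟩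

/-! ### Auxiliary lemmas -/

lemma star_adj {n : ℕ} [NeZero n] (i j : Fin n) :
    (starGraph n).Adj i j ↔ i ≠ j ∧ (i = 0 ∨ j = 0) := by
  show (i ≠ j ∧ (i.val = 0 ∨ j.val = 0)) ↔ _
  simp only [Fin.ext_iff, Fin.val_zero]

lemma star_neighborFinset_zero {n : ℕ} [NeZero n] :
    (starGraph n).neighborFinset 0 = Finset.univ.erase 0 := by
  ext j
  simp [SimpleGraph.mem_neighborFinset, star_adj, eq_comm]

lemma star_degree_zero {n : ℕ} [NeZero n] : (starGraph n).degree 0 = n - 1 := by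
  rw [SimpleGraph.degree, star_neighborFinset_zero, Finset.card_erase_of_mem (Finset.mem_univ _)]
  simp

lemma star_neighborFinset_ne {n : ℕ} [NeZero n] (i : Fin n) (hi : i ≠ 0) :
    (starGraph n).neighborFinset i = {0} := by
  ext j
  simp only [SimpleGraph.mem_neighborFinset, star_adj, Finset.mem_singleton]
  constructor
  · rintro ⟨hij, h | h⟩
    · exact absurd h hi
    · exact h
  · rintro rfl
    exact ⟨hi, Or.inr rfl⟩

lemma star_degree_ne {n : ℕ} [NeZero n] (i : Fin n) (hi : i ≠ 0) :
    (starGraph n).degree i = 1 := by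
  rw [SimpleGraph.degree, star_neighborFinset_ne i hi, Finset.card_singleton]

lemma star_edgeFinset {n : ℕ} [NeZero n] :
    (starGraph n).edgeFinset = (Finset.univ.erase (0 : Fin n)).image (fun i => s(0, i)) := by
  ext e
  induction e using Sym2.ind with
  | _ x y =>
    simp only [SimpleGraph.mem_edgeFinset, SimpleGraph.mem_edgeSet, star_adj,
      Finset.mem_image, Finset.mem_erase, Finset.mem_univ, and_true]
    constructor
    · rintro ⟨hxy, h | h⟩
      · subst h
        refine ⟨y, ?_, rfl⟩
        rintro rfl; exact hxy rfl
      · subst h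
        refine ⟨x, ?_, Sym2.eq_swap⟩
        rintro rfl; exact hxy rfl
    · rintro ⟨i, hi, he⟩
      rw [Sym2.eq_iff] at he
      rcases he with ⟨rfl, rfl⟩ | ⟨rfl, rfl⟩
      · exact ⟨fun h => hi h.symm, Or.inl rfl⟩
      · exact ⟨hi, Or.inr rfl⟩

lemma star_mem_edgeSet {n : ℕ} [NeZero n] (e : Sym2 (Fin n)) :
    e ∈ (starGraph n).edgeSet ↔ ∃ i, i ≠ 0 ∧ e = s(0, i) := by
  rw [← SimpleGraph.mem_edgeFinset, star_edgeFinset]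
  simp [eq_comm, and_comm]

lemma M_apply {n : ℕ} [NeZero n] (v w : Fin n) :
    (randicIncidence (starGraph n) * (randicIncidence (starGraph n))ᴴ) v w
    = ∑ i ∈ Finset.univ.erase (0 : Fin n),
        (if v ∈ s((0:Fin n),i) then (Real.sqrt ((starGraph n).degree v))⁻¹ else 0) *
        (if w ∈ s((0:Fin n),i) then (Real.sqrt ((starGraph n).degree w))⁻¹ else 0) := by
  rw [mul_apply]
  simp only [conjTranspose_apply, randicIncidence, star_trivial]
  refine (Finset.sum_bij
    (fun (i : Fin n) (hi : i ∈ Finset.univ.erase (0 : Fin n)) =>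
      (⟨s((0 : Fin n), i), (star_mem_edgeSet _).2 ⟨i, (Finset.mem_erase.1 hi).1, rfl⟩⟩ :
        (starGraph n).edgeSet))
    (fun a ha => Finset.mem_univ _) ?_ ?_ ?_).symm
  · intro i hi j hj hij
    have := congrArg Subtype.val hij
    simp only at this
    rw [Sym2.eq_iff] at this
    rcases this with ⟨-, h⟩ | ⟨h, h'⟩
    · exact h
    · exact absurd h'.symm ((Finset.mem_erase.1 hi).1 ∘ Eq.symm)
  · rintro ⟨e, he⟩ -
    obtain ⟨i, hi, rfl⟩ := (star_mem_edgeSet e).1 he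
    exact ⟨i, Finset.mem_erase.2 ⟨hi, Finset.mem_univ _⟩, rfl⟩
  · intro i hi
    congr 1 <;> simp [Sym2.mem_iff]

def uvec (n : ℕ) [NeZero n] : Fin n → ℝ := fun v => if v = 0 then 1 else 0
def zvec (n : ℕ) [NeZero n] : Fin n → ℝ := fun v => if v = 0 then 0 else 1

def Bmat (n : ℕ) [NeZero n] : Matrix (Fin n) (Fin n) ℝ :=
  (Real.sqrt ((n:ℝ)-1))⁻¹ • (vecMulVec (uvec n) (zvec n) + vecMulVec (zvec n) (uvec n))

lemma vmv {m p q : Type} [Fintype p] (a : m → ℝ) (b c : p → ℝ) (d : q → ℝ) :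
    vecMulVec a b * vecMulVec c d = (b ⬝ᵥ c) • vecMulVec a d := by
  ext i j
  simp only [mul_apply, vecMulVec_apply, Matrix.smul_apply, smul_eq_mul, dotProduct,
    Finset.sum_mul]
  exact Finset.sum_congr rfl (fun k _ => by ring)

lemma huu {n : ℕ} [NeZero n] : uvec n ⬝ᵥ uvec n = 1 := by
  simp [dotProduct, uvec, ite_and]

lemma huz {n : ℕ} [NeZero n] : uvec n ⬝ᵥ zvec n = 0 := by
  apply Finset.sum_eq_zero
  intro v _
  simp only [uvec, zvec]
  split <;> simp

lemma hzu {n : ℕ} [NeZero n] : zvec n ⬝ᵥ uvec n = 0 := by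
  apply Finset.sum_eq_zero
  intro v _
  simp only [uvec, zvec]
  split <;> simp

lemma hzz {n : ℕ} [NeZero n] : zvec n ⬝ᵥ zvec n = (n:ℝ) - 1 := by
  have h : ∀ v : Fin n, (zvec n v) * (zvec n v) = 1 - (if v = 0 then 1 else 0) := by
    intro v
    simp only [zvec]
    split <;> norm_num
  simp only [dotProduct, h, Finset.sum_sub_distrib, Finset.sum_const, Finset.card_univ,
    Fintype.card_fin, nsmul_eq_mul, mul_one, Finset.sum_ite_eq]
  simp

lemma trace_vecMulVec {m : Type} [Fintype m] (a b : m → ℝ) :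
    (vecMulVec a b).trace = a ⬝ᵥ b := by
  simp [Matrix.trace, Matrix.diag, vecMulVec_apply, dotProduct]

lemma Bcube {n : ℕ} [NeZero n] (hn : 2 ≤ n) : Bmat n * Bmat n * Bmat n = Bmat n := by
  have hpos : (0:ℝ) < (n:ℝ) - 1 := by
    have : (2:ℝ) ≤ n := by exact_mod_cast hn
    linarith
  simp only [Bmat, smul_mul_assoc, mul_smul_comm, add_mul, mul_add, vmv, huu, huz, hzu, hzz,
    zero_smul, smul_zero, one_smul, add_zero, zero_add, smul_add, smul_smul]
  match_scalars <;> field_simp <;> rw [Real.sq_sqrt hpos.le]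

lemma trace_Bmat {n : ℕ} [NeZero n] : (Bmat n).trace = 0 := by
  simp [Bmat, Matrix.trace_add, Matrix.trace_smul, _root_.trace_vecMulVec, huz, hzu]

lemma trace_Bmat_sq {n : ℕ} [NeZero n] (hn : 2 ≤ n) : (Bmat n * Bmat n).trace = 2 := by
  have hpos : (0:ℝ) < (n:ℝ) - 1 := by
    have : (2:ℝ) ≤ n := by exact_mod_cast hn
    linarith
  have hcsq : (Real.sqrt ((n:ℝ)-1))⁻¹ * (Real.sqrt ((n:ℝ)-1))⁻¹ = ((n:ℝ)-1)⁻¹ := by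
    rw [← mul_inv, Real.mul_self_sqrt (by linarith)]
  simp only [Bmat, smul_mul_assoc, mul_smul_comm, add_mul, mul_add, vmv, huu, huz, hzu, hzz,
    zero_smul, smul_zero, one_smul, add_zero, zero_add, smul_add, smul_smul,
    Matrix.trace_add, Matrix.trace_smul, _root_.trace_vecMulVec, smul_eq_mul, hcsq]
  field_simp
  ring_nf
  rw [Real.sq_sqrt (by linarith)]
  ring

lemma M_eq {n : ℕ} [NeZero n] (hn : 2 ≤ n) :
    randicIncidence (starGraph n) * (randicIncidence (starGraph n))ᴴ = 1 + Bmat n := by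
  have hn1 : (1:ℝ) ≤ (n:ℝ) - 1 := by
    have : (2:ℝ) ≤ n := by exact_mod_cast hn
    linarith
  have hpos : (0:ℝ) < (n:ℝ) - 1 := by linarith
  have h0 : (Real.sqrt ((starGraph n).degree 0))⁻¹ = (Real.sqrt ((n:ℝ)-1))⁻¹ := by
    rw [star_degree_zero, Nat.cast_sub (by omega), Nat.cast_one]
  have h1 : ∀ w : Fin n, w ≠ 0 → (Real.sqrt ((starGraph n).degree w))⁻¹ = 1 := by
    intro w hw
    rw [star_degree_ne w hw]
    simp
  have hcsq : (Real.sqrt ((n:ℝ)-1))⁻¹ * (Real.sqrt ((n:ℝ)-1))⁻¹ = ((n:ℝ)-1)⁻¹ := by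
    rw [← mul_inv, Real.mul_self_sqrt (by linarith)]
  ext v w
  rw [M_apply]
  simp only [Bmat, uvec, zvec, Matrix.add_apply, Matrix.one_apply, Matrix.smul_apply,
    Matrix.add_apply, vecMulVec_apply, smul_eq_mul, Sym2.mem_iff]
  by_cases hv : v = 0 <;> by_cases hw : w = 0
  · subst hv; subst hw
    have hsummand : ∀ i ∈ Finset.univ.erase (0:Fin n),
        (if (0:Fin n) = 0 ∨ (0:Fin n) = i then (Real.sqrt ((starGraph n).degree 0))⁻¹ else 0) *
        (if (0:Fin n) = 0 ∨ (0:Fin n) = i then (Real.sqrt ((starGraph n).degree 0))⁻¹ else 0)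
        = ((n:ℝ)-1)⁻¹ := by
      intro i _
      rw [if_pos (Or.inl rfl), h0, hcsq]
    rw [Finset.sum_congr rfl hsummand, Finset.sum_const, nsmul_eq_mul,
      Finset.card_erase_of_mem (Finset.mem_univ _), Finset.card_univ, Fintype.card_fin,
      Nat.cast_sub (by omega), Nat.cast_one]
    simp [mul_inv_cancel₀ (ne_of_gt hpos)]
  · subst hv
    have hsummand : ∀ i ∈ Finset.univ.erase (0:Fin n),
        (if (0:Fin n) = 0 ∨ (0:Fin n) = i then (Real.sqrt ((starGraph n).degree 0))⁻¹ else 0) *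
        (if w = 0 ∨ w = i then (Real.sqrt ((starGraph n).degree w))⁻¹ else 0)
        = if i = w then (Real.sqrt ((n:ℝ)-1))⁻¹ else 0 := by
      intro i _
      rw [if_pos (Or.inl rfl), h0, h1 w hw]
      by_cases hiw : i = w
      · subst hiw; rw [if_pos (Or.inr rfl), if_pos rfl, mul_one]
      · have : ¬(w = 0 ∨ w = i) := by rintro (h|h); exacts [hw h, hiw h.symm]
        rw [if_neg this, if_neg hiw, mul_zero]
    rw [Finset.sum_congr rfl hsummand, Finset.sum_ite_eq' _ w]
    rw [if_pos (Finset.mem_erase.2 ⟨hw, Finset.mem_univ _⟩)]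
    simp [hw, Ne.symm hw]
  · subst hw
    have hsummand : ∀ i ∈ Finset.univ.erase (0:Fin n),
        (if v = 0 ∨ v = i then (Real.sqrt ((starGraph n).degree v))⁻¹ else 0) *
        (if (0:Fin n) = 0 ∨ (0:Fin n) = i then (Real.sqrt ((starGraph n).degree 0))⁻¹ else 0)
        = if i = v then (Real.sqrt ((n:ℝ)-1))⁻¹ else 0 := by
      intro i _
      rw [if_pos (Or.inl rfl), h0, h1 v hv]
      by_cases hiv : i = v
      · subst hiv; rw [if_pos (Or.inr rfl), if_pos rfl, one_mul]
      · have : ¬(v = 0 ∨ v = i) := by rintro (h|h); exacts [hv h, hiv h.symm]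
        rw [if_neg this, if_neg hiv, zero_mul]
    rw [Finset.sum_congr rfl hsummand, Finset.sum_ite_eq' _ v]
    rw [if_pos (Finset.mem_erase.2 ⟨hv, Finset.mem_univ _⟩)]
    simp [hv]
  · rcases eq_or_ne v w with rfl | hvw
    · have hsummand : ∀ i ∈ Finset.univ.erase (0:Fin n),
          (if v = 0 ∨ v = i then (Real.sqrt ((starGraph n).degree v))⁻¹ else 0) *
          (if v = 0 ∨ v = i then (Real.sqrt ((starGraph n).degree v))⁻¹ else 0)
          = if i = v then (1:ℝ) else 0 := by
        intro i _
        rw [h1 v hv]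
        by_cases hiv : i = v
        · subst hiv; rw [if_pos (Or.inr rfl), if_pos rfl, mul_one]
        · have : ¬(v = 0 ∨ v = i) := by rintro (h|h); exacts [hv h, hiv h.symm]
          rw [if_neg this, if_neg hiv, mul_zero]
      rw [Finset.sum_congr rfl hsummand, Finset.sum_ite_eq' _ v]
      rw [if_pos (Finset.mem_erase.2 ⟨hv, Finset.mem_univ _⟩)]
      simp [hv]
    · have hsummand : ∀ i ∈ Finset.univ.erase (0:Fin n),
          (if v = 0 ∨ v = i then (Real.sqrt ((starGraph n).degree v))⁻¹ else 0) *
          (if w = 0 ∨ w = i then (Real.sqrt ((starGraph n).degree w))⁻¹ else 0)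
          = 0 := by
        intro i _
        by_cases hiv : i = v
        · subst hiv
          have : ¬(w = 0 ∨ w = i) := by rintro (h|h); exacts [hw h, hvw (h.symm)]
          rw [if_neg this, mul_zero]
        · have : ¬(v = 0 ∨ v = i) := by rintro (h|h); exacts [hv h, hiv h.symm]
          rw [if_neg this, zero_mul]
      rw [Finset.sum_congr rfl hsummand, Finset.sum_const, smul_zero]
      simp [hvw, hv, hw]

section Spec

variable {m : Type} [Fintype m] [DecidableEq m] {A : Matrix m m ℝ}

lemma trace_eig (hA : A.IsHermitian) : A.trace = ∑ i, hA.eigenvalues i := by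
  nth_rewrite 1 [hA.spectral_theorem]
  rw [Unitary.conjStarAlgAut_apply, Matrix.trace_mul_cycle, Unitary.coe_star_mul_self, one_mul, Matrix.trace_diagonal]
  simp

lemma sq_spectral (hA : A.IsHermitian) :
    A * A = (hA.eigenvectorUnitary : Matrix m m ℝ) *
      (Matrix.diagonal (fun i => hA.eigenvalues i * hA.eigenvalues i)) *
      star (hA.eigenvectorUnitary : Matrix m m ℝ) := by
  set U := (hA.eigenvectorUnitary : Matrix m m ℝ)
  set D := (Matrix.diagonal (RCLike.ofReal ∘ hA.eigenvalues) : Matrix m m ℝ) with hD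
  have h1 : A = U * D * star U := by have := hA.spectral_theorem; rwa [Unitary.conjStarAlgAut_apply] at this
  have hsU : star U * U = 1 := Unitary.coe_star_mul_self _
  calc A * A = U * D * star U * (U * D * star U) := by rw [← h1]
    _ = U * (D * D) * star U := by
        rw [mul_assoc (U * D) (star U) _, ← mul_assoc (star U) _ _, ← mul_assoc (star U) U D,
          hsU, one_mul]
        noncomm_ring
    _ = _ := by
        rw [hD]
        congr 1
        congr 1
        rw [Matrix.diagonal_mul_diagonal]
        rfl

lemma trace_sq_eig (hA : A.IsHermitian) :
    (A * A).trace = ∑ i, hA.eigenvalues i * hA.eigenvalues i := by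
  rw [sq_spectral hA, Matrix.trace_mul_cycle, Unitary.coe_star_mul_self, one_mul,
    Matrix.trace_diagonal]

lemma eig_mem (hA : A.IsHermitian) (hP : A*A*A + A + A = A*A + A*A + A*A) (i : m) :
    hA.eigenvalues i = 0 ∨ hA.eigenvalues i = 1 ∨ hA.eigenvalues i = 2 := by
  set t := hA.eigenvalues i with ht
  set v : m → ℝ := ⇑(hA.eigenvectorBasis i) with hvdef
  have hv : A *ᵥ v = t • v := hA.mulVec_eigenvectorBasis i
  have hv2 : (A*A) *ᵥ v = (t*t) • v := by
    rw [← Matrix.mulVec_mulVec, hv, Matrix.mulVec_smul, hv, smul_smul]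
  have hv3 : (A*A*A) *ᵥ v = (t*(t*t)) • v := by
    rw [← Matrix.mulVec_mulVec, hv, Matrix.mulVec_smul, hv2, smul_smul]
  have hvne : v ≠ 0 := by
    have h := hA.eigenvectorBasis.orthonormal.ne_zero i
    intro hc
    apply h
    apply PiLp.ext
    intro j
    exact congrFun hc j
  have hcomb := congrArg (fun X => X *ᵥ v) hP
  simp only [Matrix.add_mulVec, hv, hv2, hv3] at hcomb
  have hs : (t*(t*t) + t + t - (t*t + t*t + t*t)) • v = 0 := by
    simp only [sub_smul, add_smul, hcomb]
    abel
  have hzero : t*(t*t) + t + t - (t*t + t*t + t*t) = 0 := by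
    rcases smul_eq_zero.1 hs with h | h
    · exact h
    · exact absurd h hvne
  have hfac : t * (t - 1) * (t - 2) = 0 := by linear_combination hzero
  rcases mul_eq_zero.1 hfac with h | h
  · rcases mul_eq_zero.1 h with h' | h'
    · exact Or.inl h'
    · exact Or.inr (Or.inl (by linarith))
  · exact Or.inr (Or.inr (by linarith))

end Spec

lemma sum_comp_eigs {m : Type} [Fintype m] {f : m → ℝ}
    (h : ∀ i, f i = 0 ∨ f i = 1 ∨ f i = 2) (g : ℝ → ℝ) (hg : g 0 = 0) :
    ∑ i, g (f i) = ((Finset.univ.filter (fun i => f i = 1)).card : ℝ) * g 1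
      + ((Finset.univ.filter (fun i => f i = 2)).card : ℝ) * g 2 := by
  rw [← Finset.sum_filter_add_sum_filter_not Finset.univ (fun i => f i = 1)]
  have e1 : ∑ i ∈ Finset.univ.filter (fun i => f i = 1), g (f i)
      = ((Finset.univ.filter (fun i => f i = 1)).card : ℝ) * g 1 := by
    rw [Finset.sum_congr rfl (fun i hi => by rw [(Finset.mem_filter.1 hi).2]),
      Finset.sum_const, nsmul_eq_mul]
  rw [e1, ← Finset.sum_filter_add_sum_filter_not
    (Finset.univ.filter (fun i => ¬ f i = 1)) (fun i => f i = 2)]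
  have hset : (Finset.univ.filter (fun i => ¬ f i = 1)).filter (fun i => f i = 2)
      = Finset.univ.filter (fun i => f i = 2) := by
    ext i
    simp only [Finset.mem_filter, Finset.mem_univ, true_and]
    constructor
    · rintro ⟨-, h2⟩; exact h2
    · intro h2; exact ⟨by rw [h2]; norm_num, h2⟩
  have e2 : ∑ i ∈ (Finset.univ.filter (fun i => ¬ f i = 1)).filter (fun i => f i = 2), g (f i)
      = ((Finset.univ.filter (fun i => f i = 2)).card : ℝ) * g 2 := by
    rw [hset, Finset.sum_congr rfl (fun i hi => by rw [(Finset.mem_filter.1 hi).2]),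
      Finset.sum_const, nsmul_eq_mul]
  have e3 : ∑ i ∈ (Finset.univ.filter (fun i => ¬ f i = 1)).filter (fun i => ¬ f i = 2),
      g (f i) = 0 := by
    apply Finset.sum_eq_zero
    intro i hi
    rcases Finset.mem_filter.1 hi with ⟨hi1, hi2⟩
    rcases Finset.mem_filter.1 hi1 with ⟨-, hi1⟩
    rcases h i with h0 | h1 | h2
    · rw [h0, hg]
    · exact absurd h1 hi1
    · exact absurd h2 hi2
  rw [e2, e3, add_zero]

theorem randicIncidenceEnergy_star {n : ℕ} (hn : 2 ≤ n) :
    randicIncidenceEnergy (starGraph n) = (n : ℝ) - 2 + Real.sqrt 2 := by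
  haveI : NeZero n := ⟨by omega⟩
  set M := randicIncidence (starGraph n) * (randicIncidence (starGraph n))ᴴ with hMdef
  have hM : M.IsHermitian := Matrix.isHermitian_mul_conjTranspose_self _
  have hMeq : M = 1 + Bmat n := M_eq hn
  have hP : M*M*M + M + M = M*M + M*M + M*M := by
    rw [hMeq]
    have h3 := Bcube (n := n) hn
    have key : (1+Bmat n)*(1+Bmat n)*(1+Bmat n) + (1+Bmat n) + (1+Bmat n)
        = ((1+Bmat n)*(1+Bmat n) + (1+Bmat n)*(1+Bmat n) + (1+Bmat n)*(1+Bmat n))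
          + (Bmat n*Bmat n*Bmat n - Bmat n) := by noncomm_ring
    rw [key, h3]
    simp
  have hroots := eig_mem hM hP
  set f := hM.eigenvalues with hf
  -- trace computations
  have htr : M.trace = (n:ℝ) := by
    rw [hMeq, Matrix.trace_add, Matrix.trace_one, trace_Bmat, add_zero, Fintype.card_fin]
  have htr2 : (M*M).trace = (n:ℝ) + 2 := by
    have expand : (1+Bmat n) * (1+Bmat n) = 1 + Bmat n + Bmat n + Bmat n * Bmat n := by
      noncomm_ring
    rw [hMeq, expand, Matrix.trace_add, Matrix.trace_add, Matrix.trace_add, Matrix.trace_one,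
      trace_Bmat, trace_Bmat_sq hn, Fintype.card_fin, add_zero, add_zero]
  have hsum1 : ∑ i, f i = (n:ℝ) := by rw [← trace_eig hM, htr]
  have hsum2 : ∑ i, f i * f i = (n:ℝ) + 2 := by rw [← trace_sq_eig hM, htr2]
  have k1 := sum_comp_eigs hroots (fun x => x) rfl
  have k2 := sum_comp_eigs hroots (fun x => x * x) (by norm_num)
  have k3 := sum_comp_eigs hroots Real.sqrt Real.sqrt_zero
  rw [hsum1] at k1
  rw [hsum2] at k2
  set c1 := ((Finset.univ.filter (fun i => f i = 1)).card : ℝ)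
  set c2 := ((Finset.univ.filter (fun i => f i = 2)).card : ℝ)
  have hc2 : c2 = 1 := by nlinarith [k1, k2]
  have hc1 : c1 = (n:ℝ) - 2 := by nlinarith [k1, k2]
  have hE : randicIncidenceEnergy (starGraph n) = ∑ i, Real.sqrt (f i) := rfl
  rw [hE, k3, hc1, hc2, Real.sqrt_one]
  ring
end
end

section
/- The singular values of the Randić incidence matrix of the star S_n (n ≥ 2) are √2, 1 (with multiplicity n-2), and 0. -/
open Matrix BigOperators

attribute [local instance] Classical.propDecidable

noncomputable section

section
open Polynomial


lemma charpoly_conj' {R n' : Type*} [CommRing R] [Fintype n'] [DecidableEq n']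
    (B P Q : Matrix n' n' R) (hQP : Q * P = 1) :
    (P * B * Q).charpoly = B.charpoly := by
  have hPQ : P * Q = 1 := mul_eq_one_comm.mpr hQP
  have hsc : ∀ M : Matrix n' n' R[X], Matrix.scalar n' (X : R[X]) * M = M * Matrix.scalar n' X :=
    fun M => (Matrix.scalar_commute (X : R[X]) (Commute.all X) M).symm ▸ rfl
  have hc : charmatrix (P * B * Q) = P.map C * charmatrix B * Q.map C := by
    simp only [charmatrix, RingHom.mapMatrix_apply]
    rw [Matrix.mul_sub, Matrix.sub_mul, Matrix.map_mul, Matrix.map_mul]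
    congr 1
    rw [← (Matrix.scalar_commute (X : R[X]) (Commute.all X) (P.map C)).eq, Matrix.mul_assoc,
      ← Matrix.map_mul, hPQ]
    simp
  rw [Matrix.charpoly, hc, Matrix.det_mul, Matrix.det_mul, Matrix.charpoly]
  have h1 : P.map (C : R →+* R[X]) * Q.map C = 1 := by
    rw [← Matrix.map_mul, hPQ]; simp
  have := congrArg Matrix.det h1
  rw [Matrix.det_mul] at this
  simp only [Matrix.det_one] at this
  calc (P.map C).det * (charmatrix B).det * (Q.map C).det
      = (P.map C).det * (Q.map C).det * (charmatrix B).det := by ring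
    _ = (charmatrix B).det := by rw [this, one_mul]

lemma charpoly_diagonal' {R n' : Type*} [CommRing R] [Fintype n'] [DecidableEq n']
    (d : n' → R) : (Matrix.diagonal d).charpoly = ∏ i, (X - C (d i)) := by
  have : charmatrix (Matrix.diagonal d) = Matrix.diagonal fun i => X - C (d i) := by
    ext i j
    by_cases h : i = j
    · subst h; simp
    · simp [Matrix.charmatrix_apply_ne _ _ _ h, Matrix.diagonal_apply_ne _ h]
  rw [Matrix.charpoly, this, Matrix.det_diagonal]

lemma roots_prod_X_sub_C'' {R n' : Type*} [CommRing R] [IsDomain R] [Fintype n'] (f : n' → R) :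
    (∏ i, (X - C (f i))).roots = Multiset.map f Finset.univ.val := by
  rw [show (∏ i, (X - C (f i))) = ((Finset.univ.val.map f).map fun a => X - C a).prod by
    rw [Multiset.map_map]; rfl]
  exact roots_multiset_prod_X_sub_C _

lemma eigs_multiset {n' : Type} [Fintype n'] [DecidableEq n'] {A : Matrix n' n' ℝ}
    (hA : A.IsHermitian) (d : n' → ℝ) (P Q : Matrix n' n' ℝ) (hQP : Q * P = 1)
    (hAPDQ : A = P * Matrix.diagonal d * Q) :
    Multiset.map hA.eigenvalues Finset.univ.val = Multiset.map d Finset.univ.val := by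
  have h1 : A.charpoly = ∏ i, (X - C (hA.eigenvalues i)) := by
    have hU := (Matrix.mem_unitaryGroup_iff').mp (hA.eigenvectorUnitary).2
    have := hA.spectral_theorem
    rw [RCLike.ofReal_real_eq_id] at this
    simp only [Function.id_comp] at this
    have hcp := congrArg Matrix.charpoly this
    rw [Unitary.conjStarAlgAut_apply, charpoly_conj' _ _ _ hU, charpoly_diagonal'] at hcp
    exact hcp
  have h2 : A.charpoly = ∏ i, (X - C (d i)) := by
    rw [hAPDQ, charpoly_conj' _ _ _ hQP, charpoly_diagonal']
  have := h1.symm.trans h2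
  have := congrArg Polynomial.roots this
  rwa [roots_prod_X_sub_C'', roots_prod_X_sub_C''] at this

end

namespace StarAux

open Polynomial

variable {m : ℕ}

lemma star_adj (i j : Fin (m+2)) : (starGraph (m+2)).Adj i j ↔ i ≠ j ∧ (i = 0 ∨ j = 0) := by
  simp only [starGraph, Fin.ext_iff, Fin.val_zero]

lemma deg0 : (starGraph (m+2)).degree 0 = m + 1 := by
  have h : (starGraph (m+2)).neighborFinset 0 = Finset.univ.erase 0 := by
    ext j
    simp [SimpleGraph.mem_neighborFinset, star_adj, eq_comm, ne_comm]
  rw [SimpleGraph.degree, h, Finset.card_erase_of_mem (Finset.mem_univ _), Finset.card_univ,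
    Fintype.card_fin]
  rfl

lemma degi (i : Fin (m+2)) (hi : i ≠ 0) : (starGraph (m+2)).degree i = 1 := by
  have h : (starGraph (m+2)).neighborFinset i = {0} := by
    ext j
    simp only [SimpleGraph.mem_neighborFinset, star_adj, Finset.mem_singleton]
    constructor
    · rintro ⟨hne, h0 | h0⟩
      · exact absurd h0 hi
      · exact h0
    · rintro rfl; exact ⟨hi, Or.inr rfl⟩
  rw [SimpleGraph.degree, h, Finset.card_singleton]

def phi (m : ℕ) : {i : Fin (m+2) // i ≠ 0} → (starGraph (m+2)).edgeSet :=
  fun i => ⟨s(0, i.1), by rw [SimpleGraph.mem_edgeSet, star_adj]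
                          exact ⟨fun h => i.2 h.symm, Or.inl rfl⟩⟩

lemma phi_bij : Function.Bijective (phi m) := by
  constructor
  · rintro ⟨i, hi⟩ ⟨j, hj⟩ h
    apply Subtype.ext
    have h' : s((0 : Fin (m+2)), i) = s(0, j) := congrArg Subtype.val h
    rcases Sym2.eq_iff.mp h' with ⟨-, h''⟩ | ⟨h1, h2⟩
    · exact h''
    · exact absurd h2 hi
  · rintro ⟨e, he⟩
    induction e using Sym2.ind with
    | _ a b =>
      rw [SimpleGraph.mem_edgeSet, star_adj] at he
      rcases he with ⟨hab, rfl | rfl⟩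
      · exact ⟨⟨b, fun h => hab h.symm⟩, Subtype.ext rfl⟩
      · exact ⟨⟨a, fun h => hab h⟩, Subtype.ext (by simp [phi, Sym2.eq_swap])⟩

lemma card_ne_zero : Fintype.card {i : Fin (m+2) // i ≠ 0} = m + 1 := by
  simp [Fintype.card_subtype_compl]

def cst (m : ℕ) : ℝ := (Real.sqrt (m+1))⁻¹

lemma cst_sq : cst m * cst m * ((m:ℝ)+1) = 1 := by
  have h1 : (0:ℝ) < (m:ℝ)+1 := by positivity
  rw [cst]
  rw [← Real.sqrt_mul_self h1.le]
  push_cast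
  field_simp
  rw [Real.sq_sqrt (by positivity)]

lemma subtype_sum_const (r : ℝ) : ∑ _i : {i : Fin (m+2) // i ≠ 0}, r = ((m:ℝ)+1) * r := by
  rw [Finset.sum_const, Finset.card_univ, card_ne_zero, nsmul_eq_mul]
  push_cast; ring

lemma subtype_sum_ind (b : Fin (m+2)) (hb : b ≠ 0) (f : Fin (m+2) → ℝ) :
    ∑ i : {i : Fin (m+2) // i ≠ 0}, (if b = i.1 then f i.1 else 0) = f b := by
  rw [Finset.sum_eq_single (⟨b, hb⟩ : {i : Fin (m+2) // i ≠ 0})]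
  · simp
  · rintro ⟨x, hx⟩ - hxb
    rw [if_neg (fun h => hxb (Subtype.ext h.symm))]
  · exact fun h => absurd (Finset.mem_univ _) h

lemma entry (v : Fin (m+2)) (i : {i : Fin (m+2) // i ≠ 0}) :
    randicIncidence (starGraph (m+2)) v (phi m i) =
      if v = 0 then cst m else if v = i.1 then 1 else 0 := by
  have hco : ((phi m i : (starGraph (m+2)).edgeSet) : Sym2 (Fin (m+2))) = s(0, i.1) := rfl
  rw [randicIncidence]
  by_cases hv : v = 0
  · subst hv
    rw [if_pos (by rw [hco, Sym2.mem_iff]; exact Or.inl rfl), if_pos rfl, deg0, cst]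
    push_cast; ring
  · rw [if_neg hv]
    by_cases hvi : v = i.1
    · rw [if_pos (by rw [hco, Sym2.mem_iff]; exact Or.inr hvi), if_pos hvi, degi v hv]
      norm_num
    · rw [if_neg (by rw [hco, Sym2.mem_iff]; rintro (h | h); exacts [hv h, hvi h]), if_neg hvi]

def T (m : ℕ) (v i : Fin (m+2)) : ℝ := if v = 0 then cst m else if v = i then 1 else 0

lemma sum_T (v w : Fin (m+2)) :
    ∑ i : {i : Fin (m+2) // i ≠ 0}, T m v i.1 * T m w i.1 =
      if v = w then 1 else if v = 0 ∨ w = 0 then cst m else 0 := by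
  by_cases hv : v = 0 <;> by_cases hw : w = 0
  · subst hv; subst hw
    rw [show (∑ i : {i : Fin (m+2) // i ≠ 0}, T m 0 i.1 * T m 0 i.1) =
        ∑ _i : {i : Fin (m+2) // i ≠ 0}, (cst m * cst m) from
      Finset.sum_congr rfl fun i _ => by rw [T, if_pos rfl]]
    rw [subtype_sum_const, if_pos rfl, mul_comm]
    exact cst_sq
  · subst hv
    rw [show (∑ i : {i : Fin (m+2) // i ≠ 0}, T m 0 i.1 * T m w i.1) =
        ∑ i : {i : Fin (m+2) // i ≠ 0}, (if w = i.1 then cst m else 0) from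
      Finset.sum_congr rfl fun i _ => by
        simp only [T, if_pos rfl, if_neg hw]
        by_cases h : w = i.1 <;> simp [h]]
    rw [subtype_sum_ind w hw (fun _ => cst m)]
    rw [if_neg (fun h => hw h.symm), if_pos (Or.inl rfl)]
  · subst hw
    rw [show (∑ i : {i : Fin (m+2) // i ≠ 0}, T m v i.1 * T m 0 i.1) =
        ∑ i : {i : Fin (m+2) // i ≠ 0}, (if v = i.1 then cst m else 0) from
      Finset.sum_congr rfl fun i _ => by
        simp only [T, if_pos rfl, if_neg hv]
        by_cases h : v = i.1 <;> simp [h]]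
    rw [subtype_sum_ind v hv (fun _ => cst m)]
    rw [if_neg hv, if_pos (Or.inr rfl)]
  · by_cases hvw : v = w
    · subst hvw
      rw [show (∑ i : {i : Fin (m+2) // i ≠ 0}, T m v i.1 * T m v i.1) =
          ∑ i : {i : Fin (m+2) // i ≠ 0}, (if v = i.1 then (1:ℝ) else 0) from
        Finset.sum_congr rfl fun i _ => by
          simp only [T, if_neg hv]
          by_cases h : v = i.1 <;> simp [h]]
      rw [subtype_sum_ind v hv (fun _ => (1:ℝ)), if_pos rfl]
    · rw [show (∑ i : {i : Fin (m+2) // i ≠ 0}, T m v i.1 * T m w i.1) =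
          ∑ _i : {i : Fin (m+2) // i ≠ 0}, (0:ℝ) from
        Finset.sum_congr rfl fun i _ => by
          simp only [T, if_neg hv, if_neg hw]
          by_cases h1 : v = i.1
          · rw [if_neg (fun h2 : w = i.1 => hvw (h1.trans h2.symm)), mul_zero]
          · rw [if_neg h1, zero_mul]]
      rw [Finset.sum_const_zero, if_neg hvw, if_neg (by tauto)]

def Amat (m : ℕ) : Matrix (Fin (m+2)) (Fin (m+2)) ℝ := Matrix.of fun v w =>
  if v = w then 1 else if v = 0 ∨ w = 0 then cst m else 0

lemma A_eq : randicIncidence (starGraph (m+2)) * (randicIncidence (starGraph (m+2)))ᴴ =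
    Amat m := by
  ext v w
  rw [Matrix.mul_apply]
  rw [← Function.Bijective.sum_comp (phi_bij (m := m))
    (fun e => randicIncidence (starGraph (m+2)) v e * (randicIncidence (starGraph (m+2)))ᴴ e w)]
  have h : ∀ i : {i : Fin (m+2) // i ≠ 0},
      randicIncidence (starGraph (m+2)) v (phi m i) *
        (randicIncidence (starGraph (m+2)))ᴴ (phi m i) w = T m v i.1 * T m w i.1 := fun i => by
    rw [Matrix.conjTranspose_apply, star_trivial, entry v i, entry w i]; rfl
  rw [Finset.sum_congr rfl (fun i _ => h i)]
  exact (sum_T v w).trans rfl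

lemma h01 : (0 : Fin (m+2)) ≠ 1 := by
  intro h
  have := congrArg Fin.val h
  simp [Fin.val_zero, Fin.val_one] at this

def dvec (m : ℕ) : Fin (m+2) → ℝ := fun i => if i = 0 then 2 else if i = 1 then 0 else 1

def Pm (m : ℕ) : Matrix (Fin (m+2)) (Fin (m+2)) ℝ := Matrix.of fun i j =>
  if j = 0 then (if i = 0 then 1 else cst m)
  else if j = 1 then (if i = 0 then 1 else -cst m)
  else (if i = j then 1 else if i = 1 then -1 else 0)

def Qm (m : ℕ) : Matrix (Fin (m+2)) (Fin (m+2)) ℝ := Matrix.of fun i j =>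
  if i = 0 then (if j = 0 then 1/2 else cst m/2)
  else if i = 1 then (if j = 0 then 1/2 else -(cst m)/2)
  else (if j = 0 then 0 else if j = i then 1 - ((m:ℝ)+1)⁻¹ else -((m:ℝ)+1)⁻¹)

lemma sum_succ_const (r : ℝ) : ∑ _i : Fin (m+1), r = ((m:ℝ)+1) * r := by
  rw [Finset.sum_const, Finset.card_univ, Fintype.card_fin, nsmul_eq_mul]
  push_cast; ring

lemma sum_succ_ind (p : Fin (m+2)) (hp : p ≠ 0) (r : ℝ) :
    ∑ i : Fin (m+1), (if i.succ = p then r else 0) = r := by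
  rw [Finset.sum_eq_single (p.pred hp)]
  · rw [if_pos (Fin.succ_pred p hp)]
  · intro x _ hx
    rw [if_neg (fun h => hx (by subst h; exact (Fin.pred_succ x).symm))]
  · exact fun h => absurd (Finset.mem_univ _) h

lemma kne : ((m:ℝ)+1) ≠ 0 := by positivity

lemma Qm_row0 (a : Fin (m+2)) : Qm m a 0 = if a = 0 then 1/2 else if a = 1 then 1/2 else 0 := by
  by_cases ha0 : a = 0 <;> by_cases ha1 : a = 1 <;> simp [Qm, ha0, ha1]

lemma Qm_0 (x : Fin (m+2)) (hx : x ≠ 0) : Qm m 0 x = cst m / 2 := by simp [Qm, hx]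

lemma Qm_1 (x : Fin (m+2)) (hx : x ≠ 0) : Qm m 1 x = -(cst m)/2 := by
  simp [Qm, hx, h01, Ne.symm h01]

lemma Qm_a (a x : Fin (m+2)) (ha0 : a ≠ 0) (ha1 : a ≠ 1) (hx : x ≠ 0) :
    Qm m a x = (if x = a then 1 - ((m:ℝ)+1)⁻¹ else -((m:ℝ)+1)⁻¹) := by
  simp [Qm, ha0, ha1, hx]

lemma Pm_col0 (x : Fin (m+2)) : Pm m x 0 = if x = 0 then 1 else cst m := by simp [Pm]

lemma Pm_col1 (x : Fin (m+2)) : Pm m x 1 = if x = 0 then 1 else -cst m := by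
  simp [Pm, h01, Ne.symm h01]

lemma Pm_colb (x b : Fin (m+2)) (hb0 : b ≠ 0) (hb1 : b ≠ 1) :
    Pm m x b = if x = b then 1 else if x = 1 then -1 else 0 := by
  simp [Pm, hb0, hb1]

lemma QP_eq : Qm m * Pm m = 1 := by
  have hcs := cst_sq (m := m)
  have hk := kne (m := m)
  ext a b
  rw [Matrix.mul_apply, Matrix.one_apply, Fin.sum_univ_succ]
  by_cases hb0 : b = 0
  · subst hb0
    rw [show (∑ i : Fin (m+1), Qm m a i.succ * Pm m i.succ 0) =
        ∑ i : Fin (m+1), Qm m a i.succ * cst m from Finset.sum_congr rfl fun i _ => by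
      rw [Pm_col0, if_neg (Fin.succ_ne_zero i)]]
    by_cases ha0 : a = 0
    · subst ha0
      rw [show (∑ i : Fin (m+1), Qm m 0 i.succ * cst m) = ∑ _i : Fin (m+1), (cst m / 2 * cst m)
          from Finset.sum_congr rfl fun i _ => by rw [Qm_0 _ (Fin.succ_ne_zero i)]]
      rw [sum_succ_const, Qm_row0, Pm_col0, if_pos rfl, if_pos rfl, if_pos rfl]
      nlinarith [hcs]
    · by_cases ha1 : a = 1
      · subst ha1
        rw [show (∑ i : Fin (m+1), Qm m 1 i.succ * cst m) =
            ∑ _i : Fin (m+1), (-(cst m)/2 * cst m)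
            from Finset.sum_congr rfl fun i _ => by rw [Qm_1 _ (Fin.succ_ne_zero i)]]
        rw [sum_succ_const, Qm_row0, Pm_col0, if_neg ha0, if_pos rfl, if_pos rfl,
          if_neg (Ne.symm h01)]
        nlinarith [hcs]
      · rw [show (∑ i : Fin (m+1), Qm m a i.succ * cst m) =
            ∑ i : Fin (m+1), ((-(((m:ℝ)+1)⁻¹ * cst m)) + (if i.succ = a then cst m else 0))
            from Finset.sum_congr rfl fun i _ => by
          rw [Qm_a a _ ha0 ha1 (Fin.succ_ne_zero i)]
          by_cases h1 : i.succ = a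
          · rw [if_pos h1, if_pos h1]; ring
          · rw [if_neg h1, if_neg h1]; ring]
        rw [Finset.sum_add_distrib, sum_succ_const, sum_succ_ind a ha0, Qm_row0, Pm_col0,
          if_neg ha0, if_neg ha1, if_pos rfl, if_neg ha0]
        field_simp
        ring
  · by_cases hb1 : b = 1
    · subst hb1
      rw [show (∑ i : Fin (m+1), Qm m a i.succ * Pm m i.succ 1) =
          ∑ i : Fin (m+1), Qm m a i.succ * (-cst m) from Finset.sum_congr rfl fun i _ => by
        rw [Pm_col1, if_neg (Fin.succ_ne_zero i)]]
      by_cases ha0 : a = 0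
      · subst ha0
        rw [show (∑ i : Fin (m+1), Qm m 0 i.succ * (-cst m)) =
            ∑ _i : Fin (m+1), (cst m / 2 * (-cst m))
            from Finset.sum_congr rfl fun i _ => by rw [Qm_0 _ (Fin.succ_ne_zero i)]]
        rw [sum_succ_const, Qm_row0, Pm_col1, if_pos rfl, if_pos rfl, if_neg h01]
        nlinarith [hcs]
      · by_cases ha1 : a = 1
        · subst ha1
          rw [show (∑ i : Fin (m+1), Qm m 1 i.succ * (-cst m)) =
              ∑ _i : Fin (m+1), (-(cst m)/2 * (-cst m))
              from Finset.sum_congr rfl fun i _ => by rw [Qm_1 _ (Fin.succ_ne_zero i)]]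
          rw [sum_succ_const, Qm_row0, Pm_col1, if_neg ha0, if_pos rfl, if_pos rfl, if_pos rfl]
          nlinarith [hcs]
        · rw [show (∑ i : Fin (m+1), Qm m a i.succ * (-cst m)) =
              ∑ i : Fin (m+1), ((((m:ℝ)+1)⁻¹ * cst m) + (if i.succ = a then -cst m else 0))
              from Finset.sum_congr rfl fun i _ => by
            rw [Qm_a a _ ha0 ha1 (Fin.succ_ne_zero i)]
            by_cases h1 : i.succ = a
            · rw [if_pos h1, if_pos h1]; ring
            · rw [if_neg h1, if_neg h1]; ring]
          rw [Finset.sum_add_distrib, sum_succ_const, sum_succ_ind a ha0, Qm_row0, Pm_col1,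
            if_neg ha0, if_neg ha1, if_pos rfl, if_neg ha1]
          field_simp
          ring
    · -- b ∉ {0,1}
      rw [show (∑ i : Fin (m+1), Qm m a i.succ * Pm m i.succ b) =
          ∑ i : Fin (m+1), Qm m a i.succ *
            (if i.succ = b then 1 else if i.succ = 1 then -1 else 0)
          from Finset.sum_congr rfl fun i _ => by rw [Pm_colb _ b hb0 hb1]]
      rw [show (Pm m 0 b) = 0 from by
        rw [Pm_colb _ b hb0 hb1, if_neg (fun h => hb0 h.symm), if_neg h01]]
      rw [mul_zero, zero_add]
      by_cases ha0 : a = 0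
      · subst ha0
        rw [show (∑ i : Fin (m+1), Qm m 0 i.succ *
              (if i.succ = b then 1 else if i.succ = 1 then -1 else 0)) =
            ∑ i : Fin (m+1), ((if i.succ = b then cst m/2 else 0) +
              (if i.succ = 1 then -(cst m/2) else 0))
            from Finset.sum_congr rfl fun i _ => by
          rw [Qm_0 _ (Fin.succ_ne_zero i)]
          by_cases h1 : i.succ = b
          · have h2 : ¬ i.succ = 1 := fun h => hb1 (h1.symm.trans h)
            rw [if_pos h1, if_pos h1, if_neg h2]; ring
          · by_cases h2 : i.succ = 1
            · rw [if_neg h1, if_pos h2, if_neg h1, if_pos h2]; ring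
            · rw [if_neg h1, if_neg h2, if_neg h1, if_neg h2]; ring]
        rw [Finset.sum_add_distrib, sum_succ_ind b hb0, sum_succ_ind 1 (Ne.symm h01),
          if_neg (fun h : (0:Fin (m+2)) = b => hb0 h.symm)]
        ring
      · by_cases ha1 : a = 1
        · subst ha1
          rw [show (∑ i : Fin (m+1), Qm m 1 i.succ *
                (if i.succ = b then 1 else if i.succ = 1 then -1 else 0)) =
              ∑ i : Fin (m+1), ((if i.succ = b then -(cst m)/2 else 0) +
                (if i.succ = 1 then cst m/2 else 0))
              from Finset.sum_congr rfl fun i _ => by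
            rw [Qm_1 _ (Fin.succ_ne_zero i)]
            by_cases h1 : i.succ = b
            · have h2 : ¬ i.succ = 1 := fun h => hb1 (h1.symm.trans h)
              rw [if_pos h1, if_pos h1, if_neg h2]; ring
            · by_cases h2 : i.succ = 1
              · rw [if_neg h1, if_pos h2, if_neg h1, if_pos h2]; ring
              · rw [if_neg h1, if_neg h2, if_neg h1, if_neg h2]; ring]
          rw [Finset.sum_add_distrib, sum_succ_ind b hb0, sum_succ_ind 1 (Ne.symm h01),
            if_neg (fun h : (1:Fin (m+2)) = b => hb1 h.symm)]
          ring
        · rw [show (∑ i : Fin (m+1), Qm m a i.succ *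
                (if i.succ = b then 1 else if i.succ = 1 then -1 else 0)) =
              ∑ i : Fin (m+1), ((if i.succ = a then (if a = b then (1:ℝ) else 0) else 0) +
                ((if i.succ = b then -((m:ℝ)+1)⁻¹ else 0) +
                  (if i.succ = 1 then ((m:ℝ)+1)⁻¹ else 0)))
              from Finset.sum_congr rfl fun i _ => by
            rw [Qm_a a _ ha0 ha1 (Fin.succ_ne_zero i)]
            by_cases h1 : i.succ = a
            · have h3 : ¬ i.succ = 1 := fun h => ha1 (h1.symm.trans h)
              by_cases hab : a = b
              · have h2 : i.succ = b := h1.trans hab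
                rw [if_pos h1, if_pos h2, if_pos h1, if_pos hab, if_pos h2, if_neg h3]; ring
              · have h2 : ¬ i.succ = b := fun h => hab (h1.symm.trans h)
                rw [if_pos h1, if_neg h2, if_neg h3, if_pos h1, if_neg hab, if_neg h2,
                  if_neg h3]
                ring
            · by_cases h2 : i.succ = b
              · have h3 : ¬ i.succ = 1 := fun h => hb1 (h2.symm.trans h)
                rw [if_neg h1, if_neg h1, if_pos h2, if_pos h2, if_neg h3]; ring
              · by_cases h3 : i.succ = 1
                · rw [if_neg h1, if_neg h1, if_neg h2, if_neg h2, if_pos h3, if_pos h3]; ring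
                · rw [if_neg h1, if_neg h1, if_neg h2, if_neg h2, if_neg h3, if_neg h3]; ring]
          rw [Finset.sum_add_distrib, Finset.sum_add_distrib, sum_succ_ind a ha0,
            sum_succ_ind b hb0, sum_succ_ind 1 (Ne.symm h01)]
          by_cases hab : a = b <;> simp [hab]

lemma Amat_0v (v : Fin (m+2)) (hv : v ≠ 0) : Amat m 0 v = cst m := by
  simp only [Amat, Matrix.of_apply]
  rw [if_neg (fun h => hv h.symm)]
  simp

lemma Amat_v0 (i : Fin (m+2)) (hi : i ≠ 0) : Amat m i 0 = cst m := by
  simp only [Amat, Matrix.of_apply]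
  rw [if_neg hi]
  simp

lemma Amat_vv (i v : Fin (m+2)) (hi : i ≠ 0) (hv : v ≠ 0) :
    Amat m i v = if i = v then 1 else 0 := by
  simp only [Amat, Matrix.of_apply]
  by_cases h : i = v
  · rw [if_pos h, if_pos h]
  · rw [if_neg h, if_neg h, if_neg (by tauto)]

lemma dvec_0 : dvec m 0 = 2 := by simp [dvec]
lemma dvec_1 : dvec m 1 = 0 := by simp [dvec, Ne.symm (h01 (m := m))]
lemma dvec_j (j : Fin (m+2)) (hj0 : j ≠ 0) (hj1 : j ≠ 1) : dvec m j = 1 := by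
  simp [dvec, hj0, hj1]

lemma AP_eq : Amat m * Pm m = Pm m * Matrix.diagonal (dvec m) := by
  have hcs := cst_sq (m := m)
  ext i j
  rw [Matrix.mul_apply, Matrix.mul_diagonal, Fin.sum_univ_succ]
  by_cases hj0 : j = 0
  · subst hj0
    rw [dvec_0, Pm_col0 (m := m) 0, if_pos rfl, mul_one,
      show (∑ v : Fin (m+1), Amat m i v.succ * Pm m v.succ 0) =
        ∑ v : Fin (m+1), Amat m i v.succ * cst m from Finset.sum_congr rfl fun v _ => by
      rw [Pm_col0, if_neg (Fin.succ_ne_zero v)]]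
    by_cases hi0 : i = 0
    · subst hi0
      rw [show Amat m 0 0 = 1 from by simp [Amat],
        show (∑ v : Fin (m+1), Amat m 0 v.succ * cst m) =
          ∑ _v : Fin (m+1), (cst m * cst m) from Finset.sum_congr rfl fun v _ => by
        rw [Amat_0v _ (Fin.succ_ne_zero v)]]
      rw [sum_succ_const, Pm_col0, if_pos rfl]
      nlinarith [hcs]
    · rw [Amat_v0 i hi0,
        show (∑ v : Fin (m+1), Amat m i v.succ * cst m) =
          ∑ v : Fin (m+1), (if v.succ = i then cst m else 0) from
        Finset.sum_congr rfl fun v _ => by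
          rw [Amat_vv i _ hi0 (Fin.succ_ne_zero v)]
          by_cases h : i = v.succ
          · rw [if_pos h, if_pos h.symm, one_mul]
          · rw [if_neg h, if_neg (fun h' => h h'.symm), zero_mul]]
      rw [sum_succ_ind i hi0, Pm_col0, if_neg hi0]
      ring
  · by_cases hj1 : j = 1
    · subst hj1
      rw [dvec_1, mul_zero, Pm_col1 (m := m) 0, if_pos rfl, mul_one,
        show (∑ v : Fin (m+1), Amat m i v.succ * Pm m v.succ 1) =
          ∑ v : Fin (m+1), Amat m i v.succ * (-cst m) from Finset.sum_congr rfl fun v _ => by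
        rw [Pm_col1, if_neg (Fin.succ_ne_zero v)]]
      by_cases hi0 : i = 0
      · subst hi0
        rw [show Amat m 0 0 = 1 from by simp [Amat],
          show (∑ v : Fin (m+1), Amat m 0 v.succ * (-cst m)) =
            ∑ _v : Fin (m+1), (cst m * (-cst m)) from Finset.sum_congr rfl fun v _ => by
          rw [Amat_0v _ (Fin.succ_ne_zero v)]]
        rw [sum_succ_const]
        nlinarith [hcs]
      · rw [Amat_v0 i hi0,
          show (∑ v : Fin (m+1), Amat m i v.succ * (-cst m)) =
            ∑ v : Fin (m+1), (if v.succ = i then -cst m else 0) from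
          Finset.sum_congr rfl fun v _ => by
            rw [Amat_vv i _ hi0 (Fin.succ_ne_zero v)]
            by_cases h : i = v.succ
            · rw [if_pos h, if_pos h.symm, one_mul]
            · rw [if_neg h, if_neg (fun h' => h h'.symm), zero_mul]]
        rw [sum_succ_ind i hi0]
        ring
    · rw [dvec_j j hj0 hj1, mul_one,
        show (Pm m 0 j) = 0 from by
          rw [Pm_colb _ j hj0 hj1, if_neg (fun h => hj0 h.symm), if_neg h01],
        mul_zero, zero_add,
        show (∑ v : Fin (m+1), Amat m i v.succ * Pm m v.succ j) =
          ∑ v : Fin (m+1), Amat m i v.succ *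
            (if v.succ = j then 1 else if v.succ = 1 then -1 else 0) from
        Finset.sum_congr rfl fun v _ => by rw [Pm_colb _ j hj0 hj1]]
      by_cases hi0 : i = 0
      · subst hi0
        rw [show (∑ v : Fin (m+1), Amat m 0 v.succ *
              (if v.succ = j then 1 else if v.succ = 1 then -1 else 0)) =
            ∑ v : Fin (m+1), ((if v.succ = j then cst m else 0) +
              (if v.succ = 1 then -cst m else 0)) from
          Finset.sum_congr rfl fun v _ => by
            rw [Amat_0v _ (Fin.succ_ne_zero v)]
            by_cases h1 : v.succ = j
            · have h2 : ¬ v.succ = 1 := fun h => hj1 (h1.symm.trans h)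
              rw [if_pos h1, if_pos h1, if_neg h2]; ring
            · by_cases h2 : v.succ = 1
              · rw [if_neg h1, if_pos h2, if_neg h1, if_pos h2]; ring
              · rw [if_neg h1, if_neg h2, if_neg h1, if_neg h2]; ring]
        rw [Finset.sum_add_distrib, sum_succ_ind j hj0, sum_succ_ind 1 (Ne.symm h01),
          Pm_colb _ j hj0 hj1, if_neg (fun h : (0:Fin (m+2)) = j => hj0 h.symm), if_neg h01]
        ring
      · rw [show (∑ v : Fin (m+1), Amat m i v.succ *
              (if v.succ = j then 1 else if v.succ = 1 then -1 else 0)) =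
            ∑ v : Fin (m+1), (if v.succ = i then
              (if i = j then 1 else if i = 1 then -1 else 0) else 0) from
          Finset.sum_congr rfl fun v _ => by
            rw [Amat_vv i _ hi0 (Fin.succ_ne_zero v)]
            by_cases h : i = v.succ
            · rw [if_pos h, if_pos h.symm, one_mul]
              subst h; rfl
            · rw [if_neg h, zero_mul, if_neg (fun h' => h h'.symm)]]
        rw [sum_succ_ind i hi0, Pm_colb _ j hj0 hj1]

lemma dvec_multiset :
    Multiset.map (dvec m) Finset.univ.val = (2:ℝ) ::ₘ (0:ℝ) ::ₘ Multiset.replicate m 1 := by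
  have hnd : (Finset.univ.val : Multiset (Fin (m+2))).Nodup := Finset.univ.nodup
  have h0 : (0 : Fin (m+2)) ∈ (Finset.univ.val : Multiset (Fin (m+2))) := Finset.mem_univ (0 : Fin (m+2))
  have h1mem : (1 : Fin (m+2)) ∈ (Finset.univ.val : Multiset (Fin (m+2))).erase 0 := by
    rw [Multiset.mem_erase_of_ne (Ne.symm h01)]
    exact Finset.mem_univ (1 : Fin (m+2))
  have key : (Finset.univ.val : Multiset (Fin (m+2))) =
      0 ::ₘ 1 ::ₘ (((Finset.univ.val : Multiset (Fin (m+2))).erase 0).erase 1) := by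
    rw [Multiset.cons_erase h1mem, Multiset.cons_erase h0]
  rw [key, Multiset.map_cons, Multiset.map_cons, dvec_0, dvec_1]
  congr 1
  congr 1
  rw [Multiset.eq_replicate]
  constructor
  · rw [Multiset.card_map, Multiset.card_erase_of_mem h1mem, Multiset.card_erase_of_mem h0]
    have hcard : Multiset.card (Finset.univ.val : Multiset (Fin (m+2))) = m + 2 := by
      rw [← Finset.card_def, Finset.card_univ, Fintype.card_fin]
    rw [hcard]
    rfl
  · intro b hb
    rw [Multiset.mem_map] at hb
    obtain ⟨x, hx, rfl⟩ := hb
    have hnd0 := hnd.erase (0 : Fin (m+2))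
    have hx1 : x ≠ 1 := ((hnd0.mem_erase_iff).mp hx).1
    have hx' : x ∈ (Finset.univ.val : Multiset (Fin (m+2))).erase 0 :=
      Multiset.mem_of_mem_erase hx
    have hx0 : x ≠ 0 := ((hnd.mem_erase_iff).mp hx').1
    exact dvec_j x hx0 hx1

lemma randic_star_multiset :
    Multiset.map (randicSingularValues (starGraph (m+2))) Finset.univ.val =
      Real.sqrt 2 ::ₘ (0 : ℝ) ::ₘ Multiset.replicate m (1 : ℝ) := by
  have hA := Matrix.isHermitian_mul_conjTranspose_self (randicIncidence (starGraph (m+2)))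
  have hdecomp : randicIncidence (starGraph (m+2)) * (randicIncidence (starGraph (m+2)))ᴴ =
      Pm m * Matrix.diagonal (dvec m) * Qm m := by
    rw [A_eq]
    have hPQ : Pm m * Qm m = 1 := mul_eq_one_comm.mp QP_eq
    calc Amat m = Amat m * (Pm m * Qm m) := by rw [hPQ, Matrix.mul_one]
      _ = (Amat m * Pm m) * Qm m := by rw [Matrix.mul_assoc]
      _ = Pm m * Matrix.diagonal (dvec m) * Qm m := by rw [AP_eq]
  have hkey := eigs_multiset hA (dvec m) (Pm m) (Qm m) QP_eq hdecomp
  have hrs : randicSingularValues (starGraph (m+2)) = fun i => Real.sqrt (hA.eigenvalues i) :=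
    rfl
  rw [hrs]
  rw [show (Multiset.map (fun i => Real.sqrt (hA.eigenvalues i)) Finset.univ.val) =
      Multiset.map Real.sqrt (Multiset.map hA.eigenvalues Finset.univ.val) from
    (Multiset.map_map Real.sqrt hA.eigenvalues Finset.univ.val).symm]
  rw [hkey, dvec_multiset, Multiset.map_cons, Multiset.map_cons, Multiset.map_replicate,
    Real.sqrt_zero, Real.sqrt_one]

end StarAux

theorem randicSingularValues_star {n : ℕ} (hn : 2 ≤ n) :
    Multiset.map (randicSingularValues (starGraph n)) Finset.univ.val =
      Real.sqrt 2 ::ₘ (0 : ℝ) ::ₘ Multiset.replicate (n - 2) (1 : ℝ) := by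
  obtain ⟨m, rfl⟩ : ∃ m, n = m + 2 := ⟨n - 2, by omega⟩
  have h : m + 2 - 2 = m := by omega
  rw [h]
  exact StarAux.randic_star_multiset
end
end

section
/- Let G be a graph of order n ≥ 2 with no isolated vertices. Then I_RE(G) ≤ √2 + √((n-1)(n-2)), with equality if and only if G is the complete graph K_n. -/
open Matrix BigOperators

attribute [local instance] Classical.propDecidable

noncomputable section

variable {V : Type} [Fintype V]

lemma Q_entry (G : SimpleGraph V) (u v : V) :
    (randicIncidence G * (randicIncidence G)ᴴ) u v =
      ((G.edgeFinset.filter (fun e => u ∈ e ∧ v ∈ e)).card : ℝ) *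
        ((Real.sqrt (G.degree u))⁻¹ * (Real.sqrt (G.degree v))⁻¹) := by
  rw [Matrix.mul_apply]
  have h1 : ∀ e : G.edgeSet, randicIncidence G u e * ((randicIncidence G)ᴴ) e v
      = if u ∈ (e : Sym2 V) ∧ v ∈ (e : Sym2 V) then
          (Real.sqrt (G.degree u))⁻¹ * (Real.sqrt (G.degree v))⁻¹ else 0 := by
    intro e
    by_cases hu : u ∈ (e : Sym2 V) <;> by_cases hv : v ∈ (e : Sym2 V) <;>
      simp [randicIncidence, hu, hv]
  rw [Finset.sum_congr rfl (fun e _ => h1 e), Finset.sum_set_coe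
    (f := fun e => if u ∈ e ∧ v ∈ e then
      (Real.sqrt (G.degree u))⁻¹ * (Real.sqrt (G.degree v))⁻¹ else 0)]
  rw [Finset.sum_ite, Finset.sum_const_zero, add_zero, Finset.sum_const, nsmul_eq_mul]
  congr 3

lemma Q_diag (G : SimpleGraph V) {u : V} (hu : 0 < G.degree u) :
    (randicIncidence G * (randicIncidence G)ᴴ) u u = 1 := by
  rw [Q_entry]
  have h1 : (G.edgeFinset.filter (fun e => u ∈ e ∧ u ∈ e)).card = G.degree u := by
    rw [← SimpleGraph.card_incidenceFinset_eq_degree]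
    congr 1
    rw [SimpleGraph.incidenceFinset_eq_filter]
    simp
  have h0 : (G.degree u : ℝ) ≠ 0 := by positivity
  rw [h1, ← mul_inv, Real.mul_self_sqrt (by positivity)]
  exact mul_inv_cancel₀ h0

lemma Q_offdiag (G : SimpleGraph V) {u v : V} (huv : u ≠ v) :
    (randicIncidence G * (randicIncidence G)ᴴ) u v =
      if G.Adj u v then (Real.sqrt (G.degree u))⁻¹ * (Real.sqrt (G.degree v))⁻¹ else 0 := by
  rw [Q_entry]
  have h1 : G.edgeFinset.filter (fun e => u ∈ e ∧ v ∈ e)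
      = if G.Adj u v then {s(u,v)} else ∅ := by
    ext e
    simp only [Finset.mem_filter, SimpleGraph.mem_edgeFinset]
    rw [Sym2.mem_and_mem_iff huv]
    split_ifs with h
    · simp only [Finset.mem_singleton]
      constructor
      · rintro ⟨-, he⟩; exact he
      · rintro rfl; exact ⟨(SimpleGraph.mem_edgeSet G).2 h, rfl⟩
    · simp only [Finset.notMem_empty, iff_false, not_and]
      rintro he rfl
      exact h ((SimpleGraph.mem_edgeSet G).1 he)
  rw [h1]
  split_ifs with h <;> simp

lemma Q_nonneg (G : SimpleGraph V) (u v : V) :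
    0 ≤ (randicIncidence G * (randicIncidence G)ᴴ) u v := by
  rw [Q_entry]; positivity

lemma Q_symm (G : SimpleGraph V) (u v : V) :
    (randicIncidence G * (randicIncidence G)ᴴ) u v
      = (randicIncidence G * (randicIncidence G)ᴴ) v u := by
  rw [Q_entry, Q_entry]
  have : ∀ e : Sym2 V, (u ∈ e ∧ v ∈ e) ↔ (v ∈ e ∧ u ∈ e) := fun e => and_comm
  rw [Finset.filter_congr (fun e _ => this e)]
  ring

lemma Q_mulVec (G : SimpleGraph V) (hdeg : ∀ v : V, 0 < G.degree v) :
    (randicIncidence G * (randicIncidence G)ᴴ) *ᵥ (fun w => Real.sqrt (G.degree w))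
      = (2:ℝ) • (fun w => Real.sqrt (G.degree w)) := by
  funext u
  have hsd : ∀ w, Real.sqrt (G.degree w) ≠ 0 :=
    fun w => ne_of_gt (Real.sqrt_pos.2 (by exact_mod_cast hdeg w))
  show ∑ v, (randicIncidence G * (randicIncidence G)ᴴ) u v * Real.sqrt (G.degree v) = _
  rw [← Finset.sum_erase_add _ _ (Finset.mem_univ u)]
  have h2 : ∀ v ∈ Finset.univ.erase u,
      (randicIncidence G * (randicIncidence G)ᴴ) u v * Real.sqrt (G.degree v)
        = if G.Adj u v then (Real.sqrt (G.degree u))⁻¹ else 0 := by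
    intro v hv
    rw [Q_offdiag G (Finset.ne_of_mem_erase hv).symm]
    split_ifs with h
    · rw [mul_assoc, inv_mul_cancel₀ (hsd v), mul_one]
    · rw [zero_mul]
  rw [Finset.sum_congr rfl h2, Finset.sum_ite, Finset.sum_const_zero, add_zero,
    Finset.sum_const, nsmul_eq_mul]
  have h3 : ((Finset.univ.erase u).filter (fun v => G.Adj u v)).card = G.degree u := by
    rw [← SimpleGraph.card_neighborFinset_eq_degree]
    congr 1
    ext v
    simp only [Finset.mem_filter, Finset.mem_erase, Finset.mem_univ, true_and,
      SimpleGraph.mem_neighborFinset]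
    exact ⟨fun h => h.2, fun h => ⟨⟨h.ne', trivial⟩, h⟩⟩
  rw [h3, Q_diag G (hdeg u)]
  have h4 : (G.degree u : ℝ) * (Real.sqrt (G.degree u))⁻¹ = Real.sqrt (G.degree u) := by
    field_simp
    rw [div_eq_iff (hsd u), Real.mul_self_sqrt (by positivity)]
  rw [h4, one_mul, Pi.smul_apply, smul_eq_mul]
  ring

section spectral
variable (G : SimpleGraph V)

local notation "Q" => randicIncidence G * (randicIncidence G)ᴴ
local notation "hQ" => Matrix.isHermitian_mul_conjTranspose_self (randicIncidence G)
local notation "μ" => Matrix.IsHermitian.eigenvalues hQ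
local notation "U" => ((Matrix.IsHermitian.eigenvectorUnitary hQ : Matrix.unitaryGroup V ℝ) : Matrix V V ℝ)

lemma Q_shift (t : ℝ) :
    Q - t • 1 = U * Matrix.diagonal (fun i => μ i - t) * star U := by
  have hUU : U * star U = 1 :=
    Matrix.mem_unitaryGroup_iff.mp (Matrix.IsHermitian.eigenvectorUnitary hQ).2
  conv_lhs => rw [(hQ).spectral_theorem]
  have hdiag : Matrix.diagonal (fun i => μ i - t)
      = Matrix.diagonal (RCLike.ofReal ∘ μ) - t • 1 := by
    rw [Matrix.smul_one_eq_diagonal, Matrix.diagonal_sub]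
    congr
  rw [hdiag, Matrix.mul_sub, Matrix.sub_mul]
  congr 1
  rw [Matrix.mul_smul, Matrix.mul_one, Matrix.smul_mul, hUU]

lemma sum_eigs (hdeg : ∀ v : V, 0 < G.degree v) : ∑ i, μ i = (Fintype.card V : ℝ) := by
  have h0 : Q - (0:ℝ) • 1 = U * Matrix.diagonal (fun i => μ i - 0) * star U := Q_shift G 0
  simp only [zero_smul, sub_zero] at h0
  have hUU : U * star U = 1 :=
    Matrix.mem_unitaryGroup_iff.mp (Matrix.IsHermitian.eigenvectorUnitary hQ).2
  have htr : Matrix.trace Q = ∑ i, μ i := by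
    conv_lhs => rw [h0]
    rw [Matrix.trace_mul_cycle,
      Matrix.mem_unitaryGroup_iff'.mp (Matrix.IsHermitian.eigenvectorUnitary hQ).2,
      Matrix.one_mul, Matrix.trace_diagonal]
  rw [← htr, Matrix.trace]
  have : ∀ u : V, Matrix.diag Q u = 1 := fun u => Q_diag G (hdeg u)
  rw [Finset.sum_congr rfl (fun u _ => this u)]
  simp

lemma exists_eig_two (hne : Nonempty V) (hdeg : ∀ v : V, 0 < G.degree v) : ∃ i : V, μ i = 2 := by
  have hUU : U * star U = 1 :=
    Matrix.mem_unitaryGroup_iff.mp (Matrix.IsHermitian.eigenvectorUnitary hQ).2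
  have hx : (fun w => Real.sqrt (G.degree w)) ≠ (0 : V → ℝ) := by
    intro h
    obtain ⟨v0⟩ := hne
    have h2 := congrFun h v0
    have h3 : 0 < Real.sqrt (G.degree v0) := Real.sqrt_pos.2 (by exact_mod_cast hdeg v0)
    simp only [Pi.zero_apply] at h2
    linarith
  have hker : ∃ x ≠ 0, (Q - (2:ℝ) • 1) *ᵥ x = 0 := by
    refine ⟨fun w => Real.sqrt (G.degree w), hx, ?_⟩
    rw [Matrix.sub_mulVec, Q_mulVec G hdeg, Matrix.smul_mulVec, Matrix.one_mulVec,
      sub_self]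
  have hdet : (Q - (2:ℝ) • 1).det = 0 := (Matrix.exists_mulVec_eq_zero_iff).mp hker
  rw [Q_shift G 2, Matrix.det_mul, Matrix.det_mul, Matrix.det_diagonal] at hdet
  have hUdet : (U).det * (star U).det = 1 := by
    rw [← Matrix.det_mul, hUU, Matrix.det_one]
  have : (∏ i : V, (μ i - 2)) = 0 := by
    rcases mul_eq_zero.mp hdet with h | h
    · rcases mul_eq_zero.mp h with h2 | h2
      · exfalso
        have : (U).det * (star U).det = 0 := by rw [h2, zero_mul]
        rw [hUdet] at this; norm_num at this
      · exact h2
    · exfalso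
      have : (U).det * (star U).det = 0 := by rw [h, mul_zero]
      rw [hUdet] at this; norm_num at this
  obtain ⟨i, -, hi⟩ := Finset.prod_eq_zero_iff.mp this
  exact ⟨i, by linarith [sub_eq_zero.mp hi]⟩

lemma eig_mem_s8 (c : ℝ) (hid : (Q - (2:ℝ) • 1) * (Q - c • 1) = 0) (i : V) :
    μ i = 2 ∨ μ i = c := by
  have hv : Q *ᵥ ⇑((hQ).eigenvectorBasis i) = μ i • ⇑((hQ).eigenvectorBasis i) :=
    (hQ).mulVec_eigenvectorBasis i
  have hv2 : (Q - c • 1) *ᵥ ⇑((hQ).eigenvectorBasis i)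
      = (μ i - c) • ⇑((hQ).eigenvectorBasis i) := by
    rw [Matrix.sub_mulVec, hv, Matrix.smul_mulVec, Matrix.one_mulVec, ← sub_smul]
  have h0 : ((Q - (2:ℝ) • 1) * (Q - c • 1)) *ᵥ ⇑((hQ).eigenvectorBasis i)
      = ((μ i - 2) * (μ i - c)) • ⇑((hQ).eigenvectorBasis i) := by
    rw [← Matrix.mulVec_mulVec, hv2, Matrix.mulVec_smul, Matrix.sub_mulVec, hv,
      Matrix.smul_mulVec, Matrix.one_mulVec, ← sub_smul, smul_smul, mul_comm]
  rw [hid, Matrix.zero_mulVec] at h0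
  have hvne : ⇑((hQ).eigenvectorBasis i) ≠ (0 : V → ℝ) := by
    intro h
    exact (hQ).eigenvectorBasis.orthonormal.ne_zero i
      ((WithLp.equiv 2 _).injective (by simpa using h))
  rcases smul_eq_zero.mp h0.symm with h | h
  · rcases mul_eq_zero.mp h with h2 | h2
    · exact Or.inl (by linarith [sub_eq_zero.mp h2])
    · exact Or.inr (by linarith [sub_eq_zero.mp h2])
  · exact absurd h hvne

lemma quad_of_eigs (c : ℝ) (heig : ∀ i : V, μ i = 2 ∨ μ i = c) :
    (Q - (2:ℝ) • 1) * (Q - c • 1) = 0 := by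
  have hUU' : star U * U = 1 :=
    Matrix.mem_unitaryGroup_iff'.mp (Matrix.IsHermitian.eigenvectorUnitary hQ).2
  rw [Q_shift G 2, Q_shift G c]
  calc (U * Matrix.diagonal (fun i => μ i - 2) * star U)
        * (U * Matrix.diagonal (fun i => μ i - c) * star U)
      = U * (Matrix.diagonal (fun i => μ i - 2) * (star U * U)
          * Matrix.diagonal (fun i => μ i - c)) * star U := by
        simp only [Matrix.mul_assoc]
    _ = U * (Matrix.diagonal (fun i => (μ i - 2) * (μ i - c))) * star U := by
        rw [hUU', Matrix.mul_one, Matrix.diagonal_mul_diagonal]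
    _ = 0 := by
        have : (fun i => (μ i - 2) * (μ i - c)) = fun _ => (0:ℝ) := by
          funext i
          rcases heig i with h | h <;> rw [h] <;> ring
        rw [this, Matrix.diagonal_zero, Matrix.mul_zero, Matrix.zero_mul]

end spectral

lemma sq_sum_identity {ι : Type} (s : Finset ι) (a : ι → ℝ) :
    ∑ i ∈ s, ∑ j ∈ s, (a i - a j)^2
      = 2 * s.card * (∑ i ∈ s, a i ^ 2) - 2 * (∑ i ∈ s, a i)^2 := by
  have h1 : ∀ i ∈ s, ∑ j ∈ s, (a i - a j)^2
      = (s.card : ℝ) * a i ^ 2 - 2 * a i * (∑ j ∈ s, a j) + ∑ j ∈ s, a j ^ 2 := by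
    intro i _
    have : ∀ j ∈ s, (a i - a j)^2 = a i ^ 2 - 2 * a i * a j + a j ^ 2 :=
      fun j _ => by ring
    rw [Finset.sum_congr rfl this, Finset.sum_add_distrib, Finset.sum_sub_distrib,
      Finset.sum_const, ← Finset.mul_sum, nsmul_eq_mul]
  rw [Finset.sum_congr rfl h1, Finset.sum_add_distrib, Finset.sum_sub_distrib,
    ← Finset.mul_sum, ← Finset.sum_mul, Finset.sum_const, nsmul_eq_mul, ← Finset.mul_sum]
  ring

section spectral2
variable (G : SimpleGraph V)

local notation "Q" => randicIncidence G * (randicIncidence G)ᴴ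
local notation "hQ" => Matrix.isHermitian_mul_conjTranspose_self (randicIncidence G)
local notation "μ" => Matrix.IsHermitian.eigenvalues hQ
local notation "nn" => (Fintype.card V : ℝ)

lemma energy_of_eigs (hn : 2 ≤ Fintype.card V) (hdeg : ∀ v : V, 0 < G.degree v)
    (heig : ∀ i : V, μ i = 2 ∨ μ i = (nn - 2)/(nn - 1)) :
    ∑ i, Real.sqrt (μ i) = Real.sqrt 2 + Real.sqrt ((nn - 1) * (nn - 2)) := by
  have hn1 : (0:ℝ) < nn - 1 := by
    have : (2:ℝ) ≤ nn := by exact_mod_cast hn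
    linarith
  have hn2 : (0:ℝ) ≤ nn - 2 := by
    have : (2:ℝ) ≤ nn := by exact_mod_cast hn
    linarith
  set c : ℝ := (nn - 2)/(nn - 1) with hc
  have hc0 : 0 ≤ c := div_nonneg hn2 (le_of_lt hn1)
  set S : Finset V := Finset.univ.filter (fun i => μ i = 2) with hS
  have hsplit := Finset.sum_filter_add_sum_filter_not Finset.univ (fun i => μ i = 2) μ
  have hS2 : ∑ i ∈ S, μ i = 2 * S.card := by
    rw [Finset.sum_congr rfl (fun i hi => (Finset.mem_filter.mp hi).2), Finset.sum_const,
      nsmul_eq_mul]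
    ring
  set T : Finset V := Finset.univ.filter (fun i => ¬ μ i = 2) with hT
  have hTc : ∀ i ∈ T, μ i = c := by
    intro i hi
    rcases heig i with h | h
    · exact absurd h (Finset.mem_filter.mp hi).2
    · exact h
  have hT2 : ∑ i ∈ T, μ i = c * T.card := by
    rw [Finset.sum_congr rfl hTc, Finset.sum_const, nsmul_eq_mul]
    ring
  have hcard : S.card + T.card = Fintype.card V := by
    rw [hS, hT, Finset.card_filter_add_card_filter_not, Finset.card_univ]
  have hsum : (2:ℝ) * S.card + c * T.card = nn := by
    rw [← hS2, ← hT2, hsplit, sum_eigs G hdeg]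
  have hTcard : (T.card : ℝ) = nn - S.card := by
    have : ((S.card + T.card : ℕ) : ℝ) = nn := by exact_mod_cast hcard
    push_cast at this
    linarith
  have hk : (S.card : ℝ) = 1 := by
    rw [hTcard, hc] at hsum
    have h2 : 2 * (S.card:ℝ) * (nn-1) + (nn - S.card) * (nn-2) = nn * (nn-1) := by
      field_simp at hsum
      nlinarith [hsum]
    have hnpos : (0:ℝ) < nn := by linarith
    have h3 : (S.card : ℝ) * nn = 1 * nn := by nlinarith [h2]
    exact mul_right_cancel₀ (ne_of_gt hnpos) h3
  have hkN : S.card = 1 := by exact_mod_cast hk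
  have hTN : (T.card : ℝ) = nn - 1 := by rw [hTcard, hk]
  have hE := Finset.sum_filter_add_sum_filter_not Finset.univ (fun i => μ i = 2)
    (fun i => Real.sqrt (μ i))
  have hES : ∑ i ∈ S, Real.sqrt (μ i) = Real.sqrt 2 := by
    rw [Finset.sum_congr rfl (fun i hi => by
      rw [(Finset.mem_filter.mp hi).2] : ∀ i ∈ S, Real.sqrt (μ i) = Real.sqrt 2),
      Finset.sum_const, hkN, one_nsmul]
  have hET : ∑ i ∈ T, Real.sqrt (μ i) = Real.sqrt ((nn - 1) * (nn - 2)) := by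
    rw [Finset.sum_congr rfl (fun i hi => by
      rw [hTc i hi] : ∀ i ∈ T, Real.sqrt (μ i) = Real.sqrt c), Finset.sum_const,
      nsmul_eq_mul, hTN]
    rw [show (nn-1) * (nn-2) = c * (nn-1)^2 by rw [hc, div_mul_eq_mul_div, eq_div_iff hn1.ne']; ring]
    rw [Real.sqrt_mul hc0, Real.sqrt_sq (le_of_lt hn1)]
    ring
  rw [← hE, hES, hET]

lemma invsq {a : ℝ} (ha : 0 ≤ a) : (Real.sqrt a)⁻¹ * (Real.sqrt a)⁻¹ = a⁻¹ := by
  rw [← mul_inv, Real.mul_self_sqrt ha]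

lemma Q_pos_of_adj (hdeg : ∀ v : V, 0 < G.degree v) {u w : V} (h : G.Adj u w) :
    0 < (Q) u w := by
  rw [Q_offdiag G h.ne, if_pos h]
  have h1 : 0 < Real.sqrt (G.degree u) := Real.sqrt_pos.2 (by exact_mod_cast hdeg u)
  have h2 : 0 < Real.sqrt (G.degree w) := Real.sqrt_pos.2 (by exact_mod_cast hdeg w)
  positivity

lemma complete_of_quad (hn : 2 ≤ Fintype.card V) (hdeg : ∀ v : V, 0 < G.degree v)
    (hid : (Q - (2:ℝ) • 1) * (Q - ((nn-2)/(nn-1)) • 1) = 0) : G = ⊤ := by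
  have hn' : (2:ℝ) ≤ nn := by exact_mod_cast hn
  have hn1 : (0:ℝ) < nn - 1 := by linarith
  set c : ℝ := (nn-2)/(nn-1) with hc
  have hexp : (Q - (2:ℝ) • 1) * (Q - c • 1)
      = Q * Q - ((2+c) : ℝ) • Q + (2*c) • (1 : Matrix V V ℝ) := by
    rw [Matrix.sub_mul, Matrix.mul_sub, Matrix.mul_sub]
    simp only [Matrix.mul_smul, Matrix.smul_mul, Matrix.mul_one, Matrix.one_mul, smul_smul]
    rw [add_smul, mul_comm (2:ℝ) c]
    abel
  have hzero : Q * Q - ((2+c) : ℝ) • Q + (2*c) • (1 : Matrix V V ℝ) = 0 := by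
    rw [← hexp]; exact hid
  have hentry : ∀ u v : V, (∑ w, (Q) u w * (Q) w v) - (2+c) * (Q) u v
      + (if u = v then 2*c else 0) = 0 := by
    intro u v
    have h := congrFun (congrFun hzero u) v
    simpa [Matrix.mul_apply, Matrix.sub_apply, Matrix.add_apply,
      Matrix.one_apply, smul_eq_mul, mul_ite, mul_one, mul_zero] using h
  -- no common neighbours for non-adjacent pairs
  have hnc : ∀ u v w : V, u ≠ v → ¬ G.Adj u v → ¬ (G.Adj u w ∧ G.Adj v w) := by
    rintro u v w hne hnadj ⟨h1, h2⟩
    have he := hentry u v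
    rw [if_neg hne, Q_offdiag G hne, if_neg hnadj] at he
    have hsz : ∑ w', (Q) u w' * (Q) w' v = 0 := by
      rw [mul_zero] at he
      linarith
    have hterm := (Finset.sum_eq_zero_iff_of_nonneg
      (fun x _ => mul_nonneg (Q_nonneg G u x) (Q_nonneg G x v))).mp hsz w (Finset.mem_univ w)
    have hp1 : 0 < (Q) u w := Q_pos_of_adj G hdeg h1
    have hp2 : 0 < (Q) w v := Q_pos_of_adj G hdeg h2.symm
    nlinarith
  -- adjacent vertices have equal degrees
  have hdeq : ∀ u w : V, G.Adj u w → G.degree u = G.degree w := by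
    have step : ∀ a b : V, G.Adj a b →
        insert a (G.neighborFinset a) ⊆ insert b (G.neighborFinset b) := by
      intro a b hab x hx
      rcases Finset.mem_insert.mp hx with rfl | hx
      · exact Finset.mem_insert.2 (Or.inr ((SimpleGraph.mem_neighborFinset G b x).2 hab.symm))
      · have hxa : G.Adj a x := (SimpleGraph.mem_neighborFinset G a x).1 hx
        by_cases hxb : x = b
        · subst hxb; exact Finset.mem_insert_self x _
        · have hx2 : ¬ ¬ G.Adj x b := fun hnot => hnc x b a hxb hnot ⟨hxa.symm, hab.symm⟩
          exact Finset.mem_insert.2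
            (Or.inr ((SimpleGraph.mem_neighborFinset G b x).2 (not_not.mp hx2).symm))
    intro u w huw
    have heq := Finset.Subset.antisymm (step u w huw) (step w u huw.symm)
    have c1 : (insert u (G.neighborFinset u)).card = G.degree u + 1 := by
      rw [Finset.card_insert_of_notMem (by simp), SimpleGraph.card_neighborFinset_eq_degree]
    have c2 : (insert w (G.neighborFinset w)).card = G.degree w + 1 := by
      rw [Finset.card_insert_of_notMem (by simp), SimpleGraph.card_neighborFinset_eq_degree]
    rw [heq, c2] at c1
    omega
  -- every degree equals n - 1
  have hdegval : ∀ u : V, (G.degree u : ℝ) = nn - 1 := by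
    intro u
    have he := hentry u u
    rw [if_pos rfl, Q_diag G (hdeg u)] at he
    have hprod : ∀ a b : V, ((Real.sqrt (G.degree a))⁻¹ * (Real.sqrt (G.degree b))⁻¹)
        * ((Real.sqrt (G.degree b))⁻¹ * (Real.sqrt (G.degree a))⁻¹)
        = ((G.degree a : ℝ) * (G.degree b : ℝ))⁻¹ := by
      intro a b
      rw [mul_inv, ← invsq (show (0:ℝ) ≤ (G.degree a:ℝ) by positivity),
        ← invsq (show (0:ℝ) ≤ (G.degree b:ℝ) by positivity)]
      ring
    have hsum : ∑ w, (Q) u w * (Q) w u = 1 + (G.degree u : ℝ)⁻¹ := by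
      rw [← Finset.sum_erase_add _ _ (Finset.mem_univ u), Q_diag G (hdeg u), mul_one]
      have h2 : ∀ w ∈ Finset.univ.erase u, (Q) u w * (Q) w u
          = if G.Adj u w then ((G.degree u : ℝ) * (G.degree u : ℝ))⁻¹ else 0 := by
        intro w hw
        have hwne : u ≠ w := (Finset.ne_of_mem_erase hw).symm
        rw [Q_offdiag G hwne, Q_offdiag G hwne.symm]
        split_ifs with h h' h'
        · rw [hprod u w, ← hdeq u w h]
        · exact absurd h.symm h'
        · exact absurd h'.symm h
        · rw [mul_zero]
      rw [Finset.sum_congr rfl h2, Finset.sum_ite, Finset.sum_const_zero, add_zero,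
        Finset.sum_const, nsmul_eq_mul]
      have h3 : ((Finset.univ.erase u).filter (fun w => G.Adj u w)).card = G.degree u := by
        rw [← SimpleGraph.card_neighborFinset_eq_degree]
        congr 1
        ext x
        simp only [Finset.mem_filter, Finset.mem_erase, Finset.mem_univ, true_and,
          SimpleGraph.mem_neighborFinset]
        exact ⟨fun h => h.2, fun h => ⟨⟨h.ne', trivial⟩, h⟩⟩
      rw [h3]
      have hd0 : (G.degree u : ℝ) ≠ 0 :=
        ne_of_gt (by exact_mod_cast hdeg u)
      field_simp
      ring
    rw [hsum] at he
    have h1c : (G.degree u : ℝ)⁻¹ = (nn-1)⁻¹ := by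
      have : (1:ℝ) - c = (nn-1)⁻¹ := by
        rw [hc]
        field_simp
        norm_num
      linarith
    exact inv_injective h1c
  -- conclude G = ⊤
  ext u v
  simp only [SimpleGraph.top_adj]
  constructor
  · exact fun h => h.ne
  · intro hne
    have hdN : G.degree u = Fintype.card V - 1 := by
      have hcast : ((Fintype.card V - 1 : ℕ) : ℝ) = nn - 1 := by
        rw [Nat.cast_sub (by omega)]
        norm_num
    
      exact_mod_cast (hdegval u).trans hcast.symm
    have hsub : G.neighborFinset u ⊆ Finset.univ.erase u := by
      intro x hx
      exact Finset.mem_erase.2 ⟨((SimpleGraph.mem_neighborFinset G u x).1 hx).ne',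
        Finset.mem_univ x⟩
    have hNeq : G.neighborFinset u = Finset.univ.erase u := by
      apply Finset.eq_of_subset_of_card_le hsub
      rw [Finset.card_erase_of_mem (Finset.mem_univ u), Finset.card_univ,
        SimpleGraph.card_neighborFinset_eq_degree, hdN]
    have : v ∈ G.neighborFinset u := by
      rw [hNeq]
      exact Finset.mem_erase.2 ⟨hne.symm, Finset.mem_univ v⟩
    exact (SimpleGraph.mem_neighborFinset G u v).1 this

lemma quad_of_complete (hn : 2 ≤ Fintype.card V) (hG : G = ⊤) :
    (Q - (2:ℝ) • 1) * (Q - ((nn-2)/(nn-1)) • 1) = 0 := by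
  have hn' : (2:ℝ) ≤ nn := by exact_mod_cast hn
  have hn1 : (0:ℝ) < nn - 1 := by linarith
  have hAdj : ∀ u v : V, G.Adj u v ↔ u ≠ v := by
    intro u v
    rw [hG]
    simp
  have hdegN : ∀ v : V, G.degree v = Fintype.card V - 1 := by
    intro v
    rw [← SimpleGraph.card_neighborFinset_eq_degree]
    have : G.neighborFinset v = Finset.univ.erase v := by
      ext x
      simp only [SimpleGraph.mem_neighborFinset, Finset.mem_erase, Finset.mem_univ, and_true,
        hAdj]
      exact ⟨fun h => h.symm, fun h => h.symm⟩
    rw [this, Finset.card_erase_of_mem (Finset.mem_univ v), Finset.card_univ]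
  have hdeg : ∀ v : V, 0 < G.degree v := by
    intro v
    rw [hdegN v]
    omega
  have hdcast : ∀ v : V, ((G.degree v : ℕ) : ℝ) = nn - 1 := by
    intro v
    rw [hdegN v, Nat.cast_sub (by omega)]
    norm_num
  set c : ℝ := (nn-2)/(nn-1) with hc
  set J : Matrix V V ℝ := Matrix.of (fun _ _ => (1:ℝ)) with hJ
  have hQtop : Q = c • (1 : Matrix V V ℝ) + (nn-1)⁻¹ • J := by
    ext u v
    by_cases h : u = v
    · subst h
      rw [Q_diag G (hdeg u)]
      simp only [Matrix.add_apply, Matrix.smul_apply, Matrix.one_apply_eq, hJ,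
        Matrix.of_apply, smul_eq_mul, mul_one]
      rw [hc]
      field_simp
      ring
    · rw [Q_offdiag G h, if_pos ((hAdj u v).2 h), hdcast u, hdcast v, invsq (le_of_lt hn1)]
      simp only [Matrix.add_apply, Matrix.smul_apply, Matrix.one_apply_ne h, hJ,
        Matrix.of_apply, smul_eq_mul, mul_one, mul_zero, zero_add]
  have hJJ : J * J = nn • J := by
    ext u v
    simp only [hJ, Matrix.mul_apply, Matrix.of_apply, Matrix.smul_apply, smul_eq_mul,
      mul_one, Finset.sum_const, nsmul_eq_mul, Finset.card_univ]
  have h1 : Q - c • 1 = (nn-1)⁻¹ • J := by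
    rw [hQtop, add_sub_cancel_left]
  have h2 : Q - (2:ℝ) • 1 = (nn-1)⁻¹ • J - (2-c) • 1 := by
    rw [hQtop, sub_smul]
    abel
  rw [h2, h1, Matrix.sub_mul, Matrix.smul_mul, Matrix.smul_mul, Matrix.mul_smul,
    Matrix.mul_smul, hJJ, Matrix.one_mul, smul_smul, smul_smul, smul_smul]
  rw [show (nn-1)⁻¹ * (nn-1)⁻¹ * nn = (2-c) * (nn-1)⁻¹ by
    rw [hc]; field_simp; ring]
  rw [sub_self]

end spectral2


theorem randicIncidenceEnergy_upper_bound {V : Type} [Fintype V] (G : SimpleGraph V)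
    (hn : 2 ≤ Fintype.card V) (hdeg : ∀ v : V, 0 < G.degree v) :
    randicIncidenceEnergy G ≤
        Real.sqrt 2 + Real.sqrt (((Fintype.card V : ℝ) - 1) * ((Fintype.card V : ℝ) - 2)) ∧
      (randicIncidenceEnergy G =
          Real.sqrt 2 + Real.sqrt (((Fintype.card V : ℝ) - 1) * ((Fintype.card V : ℝ) - 2)) ↔
        G = ⊤) := by
  have hn' : (2:ℝ) ≤ (Fintype.card V : ℝ) := by exact_mod_cast hn
  have hn1 : (0:ℝ) < (Fintype.card V : ℝ) - 1 := by linarith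
  have hn2 : (0:ℝ) ≤ (Fintype.card V : ℝ) - 2 := by linarith
  set ev := (Matrix.isHermitian_mul_conjTranspose_self (randicIncidence G)).eigenvalues
    with hev
  have hnn : ∀ i, 0 ≤ ev i := fun i =>
    Matrix.eigenvalues_self_mul_conjTranspose_nonneg (randicIncidence G) i
  have hNE : Nonempty V := Fintype.card_pos_iff.mp (by omega)
  obtain ⟨i₀, hi₀⟩ := exists_eig_two G hNE hdeg
  replace hi₀ : ev i₀ = 2 := hi₀
  have hsum : ∑ i, ev i = (Fintype.card V : ℝ) := sum_eigs G hdeg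
  set s : Finset V := Finset.univ.erase i₀ with hs
  have hs_card : (s.card : ℝ) = (Fintype.card V : ℝ) - 1 := by
    rw [hs, Finset.card_erase_of_mem (Finset.mem_univ i₀), Finset.card_univ,
      Nat.cast_sub (by omega)]
    norm_num
  have hsum_s : ∑ i ∈ s, ev i = (Fintype.card V : ℝ) - 2 := by
    have h := Finset.sum_erase_add Finset.univ ev (Finset.mem_univ i₀)
    rw [hi₀, hsum] at h
    linarith
  have hsnn : 0 ≤ ∑ i ∈ s, Real.sqrt (ev i) :=
    Finset.sum_nonneg fun i _ => Real.sqrt_nonneg _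
  have hCS : (∑ i ∈ s, Real.sqrt (ev i))^2
      ≤ ((Fintype.card V:ℝ)-2) * ((Fintype.card V:ℝ)-1) := by
    have h := Finset.sum_mul_sq_le_sq_mul_sq s (fun i => Real.sqrt (ev i)) (fun _ => 1)
    simp only [mul_one, one_pow] at h
    rw [Finset.sum_congr rfl (fun i (_ : i ∈ s) => Real.sq_sqrt (hnn i)), hsum_s,
      Finset.sum_const, nsmul_eq_mul, mul_one, hs_card] at h
    exact h
  have hkey : ∑ i ∈ s, Real.sqrt (ev i)
      ≤ Real.sqrt (((Fintype.card V:ℝ)-1)*((Fintype.card V:ℝ)-2)) := by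
    rw [← Real.sqrt_sq hsnn]
    apply Real.sqrt_le_sqrt
    rw [mul_comm ((Fintype.card V:ℝ)-1)]
    exact hCS
  have hdecomp : randicIncidenceEnergy G = Real.sqrt 2 + ∑ i ∈ s, Real.sqrt (ev i) := by
    show (∑ i, Real.sqrt (ev i)) = _
    rw [← Finset.add_sum_erase Finset.univ _ (Finset.mem_univ i₀), hi₀]
  refine ⟨by rw [hdecomp]; linarith, fun heq => ?_, fun hG => ?_⟩
  · rw [hdecomp] at heq
    have hSeq : ∑ i ∈ s, Real.sqrt (ev i)
        = Real.sqrt (((Fintype.card V:ℝ)-1)*((Fintype.card V:ℝ)-2)) := by linarith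
    have hprod_nonneg : (0:ℝ) ≤ ((Fintype.card V:ℝ)-1)*((Fintype.card V:ℝ)-2) := by
      nlinarith
    have hsq : (∑ i ∈ s, Real.sqrt (ev i))^2
        = ((Fintype.card V:ℝ)-1)*((Fintype.card V:ℝ)-2) := by
      rw [hSeq, Real.sq_sqrt hprod_nonneg]
    have hid0 : ∑ i ∈ s, ∑ j ∈ s, (Real.sqrt (ev i) - Real.sqrt (ev j))^2 = 0 := by
      rw [sq_sum_identity s (fun i => Real.sqrt (ev i))]
      rw [Finset.sum_congr rfl (fun i (_ : i ∈ s) => Real.sq_sqrt (hnn i)), hsum_s, hsq,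
        hs_card]
      ring
    have hall : ∀ i ∈ s, ev i = ((Fintype.card V:ℝ)-2)/((Fintype.card V:ℝ)-1) := by
      intro i hi
      have hconst : ∀ j ∈ s, ev j = ev i := by
        intro j hj
        have h1 := (Finset.sum_eq_zero_iff_of_nonneg
          (fun x _ => Finset.sum_nonneg fun y _ => sq_nonneg _)).mp hid0 j hj
        have h2 := (Finset.sum_eq_zero_iff_of_nonneg (fun y _ => sq_nonneg _)).mp h1 i hi
        have h3 : Real.sqrt (ev j) = Real.sqrt (ev i) :=
          sub_eq_zero.mp (sq_eq_zero_iff.mp h2)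
        have h4 := congrArg (fun x : ℝ => x^2) h3
        simpa [Real.sq_sqrt (hnn j), Real.sq_sqrt (hnn i)] using h4
      have hsum_i : ((Fintype.card V:ℝ) - 1) * ev i = (Fintype.card V:ℝ) - 2 := by
        rw [← hs_card, ← hsum_s, Finset.sum_congr rfl hconst, Finset.sum_const,
          nsmul_eq_mul]
      rw [eq_div_iff (ne_of_gt hn1)]
      linear_combination hsum_i
    have heig : ∀ i, ev i = 2 ∨ ev i = ((Fintype.card V:ℝ)-2)/((Fintype.card V:ℝ)-1) := by
      intro i
      by_cases h : i = i₀
      · left; rw [h]; exact hi₀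
      · right; exact hall i (Finset.mem_erase.2 ⟨h, Finset.mem_univ i⟩)
    exact complete_of_quad G hn hdeg (quad_of_eigs G _ heig)
  · have heig := fun i => eig_mem_s8 G (((Fintype.card V:ℝ)-2)/((Fintype.card V:ℝ)-1))
      (quad_of_complete G hn hG) i
    show (∑ i, Real.sqrt (ev i)) = _
    exact energy_of_eigs G hn hdeg heig
end
end

section
/- Let G be a nonempty graph with clique number c ≥ 2. Then I_RE(G) ≥ √2 + √((c-1)(c-2)). In particular, any graph with at least one edge satisfies I_RE(G) ≥ √2. -/
open Matrix BigOperators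

attribute [local instance] Classical.propDecidable

noncomputable section

set_option linter.unusedSectionVars false

-- Courant–Fischer style counting lemma
theorem eig_count {V : Type} [Fintype V] [DecidableEq V] {M : Matrix V V ℝ}
    (hM : M.IsHermitian) (t : ℝ) {ι : Type} [Fintype ι]
    (φ : (ι → ℝ) →ₗ[ℝ] (V → ℝ)) (hφ : Function.Injective φ)
    (hRay : ∀ z, t * (φ z ⬝ᵥ φ z) ≤ φ z ⬝ᵥ (M *ᵥ φ z)) :
    Fintype.card ι ≤ (Finset.univ.filter (fun i => t ≤ hM.eigenvalues i)).card := by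
  by_contra hlt
  push_neg at hlt
  set T := Finset.univ.filter (fun i => t ≤ hM.eigenvalues i) with hT
  set U : Matrix V V ℝ := (hM.eigenvectorUnitary : Matrix V V ℝ) with hU
  -- the restriction map
  let ψ : (ι → ℝ) →ₗ[ℝ] (↥T → ℝ) :=
    (LinearMap.funLeft ℝ ℝ (Subtype.val : ↥T → V)).comp
      ((Matrix.mulVecLin (star U)).comp φ)
  have hnotinj : ¬ Function.Injective ψ := by
    intro hinj
    have := LinearMap.finrank_le_finrank_of_injective hinj
    simp [Module.finrank_pi] at this
    omega
  rw [Function.not_injective_iff] at hnotinj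
  obtain ⟨a, b, hab, hne⟩ := hnotinj
  set z := a - b with hz
  have hz0 : z ≠ 0 := sub_ne_zero_of_ne hne
  have hψz : ψ z = 0 := by rw [hz, map_sub, hab, sub_self]
  set x := φ z with hx
  have hx0 : x ≠ 0 := fun h => hz0 (hφ (by rw [map_zero]; exact h))
  set y : V → ℝ := star U *ᵥ x with hy
  have hyT : ∀ i ∈ T, y i = 0 := by
    intro i hi
    have := congrFun hψz ⟨i, hi⟩
    simpa [ψ, LinearMap.funLeft, y] using this
  have hUU : U * star U = 1 := (Matrix.mem_unitaryGroup_iff).mp hM.eigenvectorUnitary.2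
  have hUU' : star U * U = 1 := (Matrix.mem_unitaryGroup_iff').mp hM.eigenvectorUnitary.2
  have hy0 : y ≠ 0 := by
    intro h
    apply hx0
    have : U *ᵥ y = x := by rw [hy, mulVec_mulVec, hUU, one_mulVec]
    rw [h, mulVec_zero] at this
    exact this.symm
  -- key identities
  have hyx : y = x ᵥ* U := by
    rw [hy, Matrix.star_eq_conjTranspose, conjTranspose_eq_transpose_of_trivial,
      mulVec_transpose]
  have hUUt : U * Uᵀ = 1 := by
    rw [← conjTranspose_eq_transpose_of_trivial, ← Matrix.star_eq_conjTranspose]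
    exact hUU
  have hxx_yy : x ⬝ᵥ x = y ⬝ᵥ y := by
    have : y ⬝ᵥ y = x ⬝ᵥ x := by
      conv_lhs => rw [hy, Matrix.dotProduct_mulVec,
        Matrix.star_eq_conjTranspose, conjTranspose_eq_transpose_of_trivial,
        vecMul_transpose, mulVec_mulVec, hUUt, one_mulVec]
    exact this.symm
  have hquad : x ⬝ᵥ (M *ᵥ x) = ∑ i, hM.eigenvalues i * (y i)^2 := by
    conv_lhs => rw [hM.spectral_theorem, Unitary.conjStarAlgAut_apply]
    rw [← mulVec_mulVec, ← mulVec_mulVec, Matrix.dotProduct_mulVec, ← hy, ← hyx]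
    simp only [Matrix.mulVec_diagonal, dotProduct, Function.comp,
      RCLike.ofReal_real_eq_id, id_eq]
    exact Finset.sum_congr rfl fun i _ => by ring
  have hlam : ∀ i ∉ T, hM.eigenvalues i < t := by
    intro i hi
    by_contra h
    exact hi (by simp [hT, not_lt.mp h])
  obtain ⟨j, hj⟩ := Function.ne_iff.mp hy0
  replace hj : y j ≠ 0 := by simpa using hj
  have hjT : j ∉ T := fun h => hj (hyT j h)
  have h1 : ∑ i, hM.eigenvalues i * (y i)^2 < ∑ i, t * (y i)^2 := by
    apply Finset.sum_lt_sum
    · intro i _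
      by_cases hi : i ∈ T
      · simp [hyT i hi]
      · nlinarith [hlam i hi, sq_nonneg (y i)]
    · refine ⟨j, Finset.mem_univ j, ?_⟩
      have h2 := hlam j hjT
      have h3 : 0 < (y j)^2 := by positivity
      nlinarith
  have h4 : ∑ i, t * (y i)^2 = t * (y ⬝ᵥ y) := by
    rw [dotProduct, Finset.mul_sum]
    exact Finset.sum_congr rfl fun i _ => by ring
  have h5 := hRay z
  rw [← hx, hquad] at h5
  rw [h4, ← hxx_yy] at h1
  linarith

variable {V : Type} [Fintype V] (G : SimpleGraph V)

lemma randic_diag (v : V) (h : 0 < G.degree v) :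
    (randicIncidence G * (randicIncidence G)ᴴ) v v = 1 := by
  rw [Matrix.mul_apply]
  simp only [Matrix.conjTranspose_apply, randicIncidence, star_trivial]
  have h1 : ∀ e : G.edgeSet,
      (if v ∈ (e : Sym2 V) then (Real.sqrt (G.degree v))⁻¹ else 0) *
      (if v ∈ (e : Sym2 V) then (Real.sqrt (G.degree v))⁻¹ else 0)
      = if v ∈ (e : Sym2 V) then ((G.degree v : ℝ))⁻¹ else 0 := by
    intro e
    by_cases hv : v ∈ (e : Sym2 V) <;> simp [hv, ← mul_inv, Real.mul_self_sqrt]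
  rw [Finset.sum_congr rfl fun e _ => h1 e]
  rw [Finset.sum_set_coe (f := fun e => if v ∈ e then ((G.degree v : ℝ))⁻¹ else 0)]
  rw [← Finset.sum_filter]
  have h2 : (G.edgeSet.toFinset.filter (fun e => v ∈ e)) = G.incidenceFinset v := by
    rw [SimpleGraph.incidenceFinset_eq_filter]
    ext e; simp
  rw [h2]
  rw [Finset.sum_const, SimpleGraph.card_incidenceFinset_eq_degree]
  rw [nsmul_eq_mul, mul_inv_cancel₀ (by exact_mod_cast h.ne')]

lemma randic_offdiag {v w : V} (h : v ≠ w) :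
    (randicIncidence G * (randicIncidence G)ᴴ) v w =
      if G.Adj v w then (Real.sqrt (G.degree v))⁻¹ * (Real.sqrt (G.degree w))⁻¹ else 0 := by
  rw [Matrix.mul_apply]
  simp only [Matrix.conjTranspose_apply, randicIncidence, star_trivial]
  have h1 : ∀ e : G.edgeSet,
      (if v ∈ (e : Sym2 V) then (Real.sqrt (G.degree v))⁻¹ else 0) *
      (if w ∈ (e : Sym2 V) then (Real.sqrt (G.degree w))⁻¹ else 0)
      = if (e : Sym2 V) = s(v, w) then
          (Real.sqrt (G.degree v))⁻¹ * (Real.sqrt (G.degree w))⁻¹ else 0 := by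
    intro e
    rw [ite_zero_mul_ite_zero]
    exact if_congr (Sym2.mem_and_mem_iff h) rfl rfl
  rw [Finset.sum_congr rfl fun e _ => h1 e]
  rw [Finset.sum_set_coe (f := fun e => if e = s(v, w) then
    (Real.sqrt (G.degree v))⁻¹ * (Real.sqrt (G.degree w))⁻¹ else 0)]
  rw [Finset.sum_ite_eq' G.edgeSet.toFinset]
  congr 1
  simp [Set.mem_toFinset]

lemma rayleigh_sqrtdeg :
    let u : V → ℝ := fun v => Real.sqrt (G.degree v)
    2 * (u ⬝ᵥ u) ≤ u ⬝ᵥ ((randicIncidence G * (randicIncidence G)ᴴ) *ᵥ u) := by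
  intro u
  set M := randicIncidence G * (randicIncidence G)ᴴ with hM
  have key : ∀ v, u v * (M *ᵥ u) v = 2 * (G.degree v : ℝ) := by
    intro v
    rw [Matrix.mulVec, dotProduct]
    rw [← Finset.add_sum_erase _ _ (Finset.mem_univ v)]
    have herase : ∑ w ∈ Finset.univ.erase v, M v w * u w
        = (Real.sqrt (G.degree v))⁻¹ * (G.degree v : ℝ) := by
      have : ∀ w ∈ Finset.univ.erase v, M v w * u w
          = if G.Adj v w then (Real.sqrt (G.degree v))⁻¹ else 0 := by
        intro w hw
        have hne : v ≠ w := fun hh => (Finset.mem_erase.mp hw).1 hh.symm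
        rw [hM, randic_offdiag G hne]
        by_cases hadj : G.Adj v w
        · have hdw : 0 < G.degree w := G.degree_pos_iff_exists_adj w |>.mpr ⟨v, hadj.symm⟩
          have : Real.sqrt (G.degree w) ≠ 0 := by
            positivity
          simp [hadj, u, mul_assoc, inv_mul_cancel₀ this]
        · simp [hadj]
      rw [Finset.sum_congr rfl this]
      rw [← Finset.sum_filter]
      have : (Finset.univ.erase v).filter (G.Adj v) = G.neighborFinset v := by
        rw [SimpleGraph.neighborFinset_eq_filter]
        ext w
        simp only [Finset.mem_filter, Finset.mem_erase, Finset.mem_univ, true_and, and_true]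
        exact ⟨fun h => h.2, fun h => ⟨fun hh => G.irrefl (hh ▸ h), h⟩⟩
      rw [this, Finset.sum_const, SimpleGraph.card_neighborFinset_eq_degree]
      simp [mul_comm]
    rw [herase]
    by_cases hd : 0 < G.degree v
    · rw [hM, randic_diag G v hd]
      have h0 : (0:ℝ) < (G.degree v : ℝ) := by exact_mod_cast hd
      have hss : Real.sqrt (G.degree v) * Real.sqrt (G.degree v) = (G.degree v : ℝ) :=
        Real.mul_self_sqrt (le_of_lt h0)
      have hs : Real.sqrt (G.degree v) ≠ 0 := by positivity
      show Real.sqrt (G.degree v) * (1 * Real.sqrt (G.degree v)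
        + (Real.sqrt (G.degree v))⁻¹ * (G.degree v : ℝ)) = 2 * (G.degree v : ℝ)
      rw [one_mul, mul_add, hss, ← mul_assoc, mul_inv_cancel₀ hs, one_mul, two_mul]
    · have hd0 : G.degree v = 0 := Nat.eq_zero_of_not_pos hd
      have : u v = 0 := by simp [u, hd0]
      simp [this, hd0]
  have h1 : u ⬝ᵥ (M *ᵥ u) = ∑ v, 2 * (G.degree v : ℝ) :=
    Finset.sum_congr rfl fun v _ => key v
  have h2 : u ⬝ᵥ u = ∑ v, (G.degree v : ℝ) :=
    Finset.sum_congr rfl fun v _ => Real.mul_self_sqrt (by positivity)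
  rw [h1, h2, Finset.mul_sum]

lemma rayleigh_clique (S : Finset V)
    (hclique : ∀ v ∈ S, ∀ w ∈ S, v ≠ w → G.Adj v w) (c : ℕ) (hc : 2 ≤ c)
    (hdeg : ∀ v ∈ S, (c : ℝ) - 1 ≤ (G.degree v : ℝ)) (x : V → ℝ)
    (hx : ∀ v ∉ S, x v = 0) :
    (1 - 1/((c : ℝ) - 1)) * (x ⬝ᵥ x)
      ≤ x ⬝ᵥ ((randicIncidence G * (randicIncidence G)ᴴ) *ᵥ x) := by
  set M := randicIncidence G * (randicIncidence G)ᴴ with hM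
  have hc1 : (0:ℝ) < (c:ℝ) - 1 := by
    have : (2:ℝ) ≤ (c:ℝ) := by exact_mod_cast hc
    linarith
  have hdpos : ∀ v ∈ S, (0:ℝ) < (G.degree v : ℝ) := fun v hv => lt_of_lt_of_le hc1 (hdeg v hv)
  set z : V → ℝ := fun v => x v * (Real.sqrt (G.degree v))⁻¹ with hzdef
  -- restrict the quadratic form to S
  have hrestr : x ⬝ᵥ (M *ᵥ x) = ∑ v ∈ S, x v * ∑ w ∈ S, M v w * x w := by
    rw [dotProduct]
    rw [← Finset.sum_subset (Finset.subset_univ S)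
      (fun v _ hv => by rw [hx v hv, zero_mul])]
    refine Finset.sum_congr rfl fun v hv => ?_
    congr 1
    rw [Matrix.mulVec, dotProduct]
    rw [← Finset.sum_subset (Finset.subset_univ S)
      (fun w _ hw => by rw [hx w hw, mul_zero])]
  have hsplit : ∀ v ∈ S, x v * ∑ w ∈ S, M v w * x w
      = x v ^ 2 + (z v * (∑ w ∈ S, z w) - z v ^ 2) := by
    intro v hv
    rw [← Finset.add_sum_erase _ _ hv]
    have hdv : 0 < G.degree v := by exact_mod_cast hdpos v hv
    have hMvv : M v v = 1 := randic_diag G v hdv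
    have hoff : ∀ w ∈ S.erase v, M v w * x w = (Real.sqrt (G.degree v))⁻¹ * z w := by
      intro w hw
      obtain ⟨hwv, hwS⟩ := Finset.mem_erase.mp hw
      have hadj : G.Adj v w := hclique v hv w hwS (fun hh => hwv hh.symm)
      rw [hM, randic_offdiag G (fun hh => hwv hh.symm), if_pos hadj, hzdef]
      ring
    rw [Finset.sum_congr rfl hoff, ← Finset.mul_sum,
      Finset.sum_erase_eq_sub hv, hMvv]
    simp only [hzdef]
    ring
  have hsum : x ⬝ᵥ (M *ᵥ x)
      = (∑ v ∈ S, x v ^ 2) + ((∑ v ∈ S, z v)^2 - ∑ v ∈ S, z v ^ 2) := by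
    rw [hrestr, Finset.sum_congr rfl hsplit, Finset.sum_add_distrib,
      Finset.sum_sub_distrib, ← Finset.sum_mul, pow_two]
  have hxx : x ⬝ᵥ x = ∑ v ∈ S, x v ^ 2 := by
    rw [dotProduct,
      ← Finset.sum_subset (Finset.subset_univ S)
        (fun v _ hv => by rw [hx v hv, zero_mul])]
    exact Finset.sum_congr rfl fun v _ => (pow_two (x v)).symm
  have hz2 : ∀ v ∈ S, z v ^ 2 ≤ x v ^ 2 * ((c:ℝ) - 1)⁻¹ := by
    intro v hv
    have hdv := hdpos v hv
    have h1 : z v ^ 2 = x v ^ 2 * ((G.degree v : ℝ))⁻¹ := by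
      rw [hzdef]
      rw [mul_pow, ← Real.sqrt_inv, Real.sq_sqrt (by positivity)]
    rw [h1]
    apply mul_le_mul_of_nonneg_left _ (sq_nonneg (x v))
    exact inv_anti₀ hc1 (hdeg v hv)
  have hzsum : ∑ v ∈ S, z v ^ 2 ≤ (∑ v ∈ S, x v ^ 2) * ((c:ℝ) - 1)⁻¹ := by
    rw [Finset.sum_mul]
    exact Finset.sum_le_sum hz2
  have hsq : (0:ℝ) ≤ (∑ v ∈ S, z v)^2 := sq_nonneg _
  have hx2 : (0:ℝ) ≤ ∑ v ∈ S, x v ^ 2 := Finset.sum_nonneg fun v _ => sq_nonneg _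
  rw [hxx, hsum]
  have : (1 - 1/((c:ℝ) - 1)) * (∑ v ∈ S, x v ^ 2)
      = (∑ v ∈ S, x v ^ 2) - (∑ v ∈ S, x v ^ 2) * ((c:ℝ) - 1)⁻¹ := by
    field_simp
  rw [this]
  linarith

def extendS (S : Finset V) : (↥S → ℝ) →ₗ[ℝ] (V → ℝ) where
  toFun z := fun v => if h : v ∈ S then z ⟨v, h⟩ else 0
  map_add' z z' := by funext v; by_cases h : v ∈ S <;> simp [h]
  map_smul' r z := by funext v; by_cases h : v ∈ S <;> simp [h]

lemma extendS_injective (S : Finset V) : Function.Injective (extendS (V := V) S) := by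
  intro z z' hzz
  funext i
  have := congrFun hzz i.1
  simpa [extendS, i.2] using this

theorem randicIncidenceEnergy_cliqueNum_lower_bound {V : Type} [Fintype V]
    (G : SimpleGraph V) (c : ℕ) (hc : G.cliqueNum = c) (hc2 : 2 ≤ c) :
    Real.sqrt 2 + Real.sqrt (((c : ℝ) - 1) * ((c : ℝ) - 2)) ≤ randicIncidenceEnergy G ∧
      (G.edgeSet.Nonempty → Real.sqrt 2 ≤ randicIncidenceEnergy G) := by
  have hcR : (2:ℝ) ≤ (c:ℝ) := by exact_mod_cast hc2
  have hc1 : (0:ℝ) < (c:ℝ) - 1 := by linarith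
  set hM := Matrix.isHermitian_mul_conjTranspose_self (randicIncidence G) with hMdef
  -- get the clique
  obtain ⟨S, hS⟩ := G.exists_isNClique_cliqueNum
  rw [hc] at hS
  have hcard : S.card = c := hS.card_eq
  have hclique : ∀ v ∈ S, ∀ w ∈ S, v ≠ w → G.Adj v w := by
    intro v hv w hw hvw
    exact hS.isClique (by exact_mod_cast hv) (by exact_mod_cast hw) hvw
  have hdeg : ∀ v ∈ S, (c : ℝ) - 1 ≤ (G.degree v : ℝ) := by
    intro v hv
    have hsub : S.erase v ⊆ G.neighborFinset v := by
      intro w hw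
      obtain ⟨hwv, hwS⟩ := Finset.mem_erase.mp hw
      exact (SimpleGraph.mem_neighborFinset G v w).mpr (hclique v hv w hwS (fun hh => hwv hh.symm))
    have := Finset.card_le_card hsub
    rw [Finset.card_erase_of_mem hv, hcard, SimpleGraph.card_neighborFinset_eq_degree] at this
    have : ((c - 1 : ℕ) : ℝ) ≤ (G.degree v : ℝ) := by exact_mod_cast this
    rwa [Nat.cast_sub (by omega), Nat.cast_one] at this
  have hdpos : ∀ v ∈ S, 0 < G.degree v := by
    intro v hv
    have := hdeg v hv
    have : (0:ℝ) < (G.degree v : ℝ) := by linarith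
    exact_mod_cast this
  -- the vertex set is nonempty and S nonempty
  obtain ⟨v₀, hv₀⟩ := Finset.card_pos.mp (by omega : 0 < S.card)
  -- Application 1 : at least one eigenvalue ≥ 2
  set u : V → ℝ := fun v => Real.sqrt (G.degree v) with hu
  have hu0 : u ≠ 0 := by
    intro hh
    have h1 := congrFun hh v₀
    have h2 : (0:ℝ) < Real.sqrt (G.degree v₀) :=
      Real.sqrt_pos.mpr (by exact_mod_cast hdpos v₀ hv₀)
    simp only [hu, Pi.zero_apply] at h1
    linarith
  set φ₁ : (Fin 1 → ℝ) →ₗ[ℝ] (V → ℝ) :=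
    (LinearMap.toSpanSingleton ℝ (V → ℝ) u).comp (LinearMap.proj 0) with hφ₁
  have hφ₁app : ∀ z, φ₁ z = z 0 • u := fun z => rfl
  have hφ₁inj : Function.Injective φ₁ := by
    intro z z' hzz
    rw [hφ₁app, hφ₁app] at hzz
    have : (z 0 - z' 0) • u = 0 := by rw [sub_smul, hzz, sub_self]
    rcases smul_eq_zero.mp this with h | h
    · funext i
      have : i = 0 := Subsingleton.elim i 0
      rw [this]
      linarith [sub_eq_zero.mp (by exact_mod_cast h)]
    · exact absurd h hu0
  have hcount1 : 1 ≤ (Finset.univ.filter (fun i => (2:ℝ) ≤ hM.eigenvalues i)).card := by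
    have := eig_count hM 2 φ₁ hφ₁inj (fun z => by
      rw [hφ₁app]
      have hbase := rayleigh_sqrtdeg G
      simp only [smul_dotProduct, dotProduct_smul, Matrix.mulVec_smul,
        smul_eq_mul] at *
      nlinarith [sq_nonneg (z 0), hbase, (by
          rw [dotProduct]
          exact Finset.sum_nonneg fun i _ => mul_self_nonneg (u i) : (0:ℝ) ≤ u ⬝ᵥ u)])
    simpa using this
  -- Application 2 : at least c eigenvalues ≥ 1 - 1/(c-1)
  set t₂ : ℝ := 1 - 1/((c:ℝ) - 1) with ht₂
  have hcount2 : c ≤ (Finset.univ.filter (fun i => t₂ ≤ hM.eigenvalues i)).card := by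
    have := eig_count hM t₂ (extendS S) (extendS_injective S) (fun z => by
      apply rayleigh_clique G S hclique c hc2 hdeg
      intro v hv
      simp [extendS, hv])
    rwa [Fintype.card_coe, hcard] at this
  set T₂ := Finset.univ.filter (fun i => t₂ ≤ hM.eigenvalues i) with hT₂
  obtain ⟨i₀, hi₀⟩ := Finset.card_pos.mp (lt_of_lt_of_le one_pos hcount1)
  have hi₀2 : (2:ℝ) ≤ hM.eigenvalues i₀ := (Finset.mem_filter.mp hi₀).2
  have ht₂le : t₂ ≤ 2 := by
    rw [ht₂]
    have : 0 < 1/((c:ℝ)-1) := by positivity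
    linarith
  have hi₀T₂ : i₀ ∈ T₂ := Finset.mem_filter.mpr ⟨Finset.mem_univ _, le_trans ht₂le hi₀2⟩
  have ht₂pos : (0:ℝ) ≤ t₂ := by
    have h : 1/((c:ℝ)-1) ≤ 1 := by
      rw [div_le_one hc1]; linarith
    rw [ht₂]; linarith
  have ht2' : t₂ = ((c:ℝ)-2)/((c:ℝ)-1) := by
    rw [ht₂]
    field_simp
    ring
  -- the main lower bound
  have hmain : Real.sqrt 2 + Real.sqrt (((c:ℝ)-1)*((c:ℝ)-2)) ≤ randicIncidenceEnergy G := by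
    have h0 : randicIncidenceEnergy G = ∑ i, Real.sqrt (hM.eigenvalues i) := rfl
    have hsub : ∑ i ∈ T₂, Real.sqrt (hM.eigenvalues i)
        ≤ ∑ i, Real.sqrt (hM.eigenvalues i) :=
      Finset.sum_le_sum_of_subset_of_nonneg (Finset.subset_univ _)
        (fun i _ _ => Real.sqrt_nonneg _)
    rw [h0]
    refine le_trans ?_ hsub
    rw [← Finset.add_sum_erase _ _ hi₀T₂]
    have h1 : Real.sqrt 2 ≤ Real.sqrt (hM.eigenvalues i₀) := Real.sqrt_le_sqrt hi₀2
    have h2 : ((T₂.erase i₀).card : ℝ) * Real.sqrt t₂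
        ≤ ∑ i ∈ T₂.erase i₀, Real.sqrt (hM.eigenvalues i) := by
      have hb : ∀ i ∈ T₂.erase i₀, Real.sqrt t₂ ≤ Real.sqrt (hM.eigenvalues i) :=
        fun i hi => Real.sqrt_le_sqrt
          (Finset.mem_filter.mp (Finset.mem_of_mem_erase hi)).2
      have := Finset.card_nsmul_le_sum (T₂.erase i₀) _ _ hb
      rwa [nsmul_eq_mul] at this
    have h3 : ((c:ℝ) - 1) * Real.sqrt t₂ ≤ ((T₂.erase i₀).card : ℝ) * Real.sqrt t₂ := by
      apply mul_le_mul_of_nonneg_right _ (Real.sqrt_nonneg _)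
      rw [Finset.card_erase_of_mem hi₀T₂]
      have hcc : c ≤ T₂.card := hcount2
      have : ((c - 1 : ℕ) : ℝ) ≤ ((T₂.card - 1 : ℕ) : ℝ) := by
        exact_mod_cast Nat.sub_le_sub_right hcc 1
      rwa [Nat.cast_sub (by omega), Nat.cast_one] at this
    have h4 : Real.sqrt (((c:ℝ)-1)*((c:ℝ)-2)) = ((c:ℝ)-1) * Real.sqrt t₂ := by
      rw [ht2']
      rw [show ((c:ℝ)-1)*((c:ℝ)-2) = ((c:ℝ)-1)^2 * (((c:ℝ)-2)/((c:ℝ)-1)) by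
        field_simp]
      rw [Real.sqrt_mul (sq_nonneg _), Real.sqrt_sq (by linarith)]
    rw [h4]
    exact add_le_add h1 (le_trans h3 h2)
  refine ⟨hmain, fun _ => ?_⟩
  have := Real.sqrt_nonneg (((c:ℝ)-1)*((c:ℝ)-2))
  linarith
end
end

section
/- Among all trees on n ≥ 2 vertices, the star S_n is the unique tree maximizing the Randić incidence energy; that is, for any tree T on n vertices with T ≇ S_n, I_RE(T) < I_RE(S_n) = n - 2 + √2. -/
open Matrix BigOperators

attribute [local instance] Classical.propDecidable

noncomputable section

namespace StarProof


variable {n : ℕ} (G : SimpleGraph (Fin n))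

abbrev M : Matrix (Fin n) (Fin n) ℝ := randicIncidence G * (randicIncidence G)ᴴ

lemma M_apply (u v : Fin n) :
    M G u v = ∑ e ∈ G.edgeFinset,
      (if u ∈ e then (Real.sqrt (G.degree u))⁻¹ else 0) *
      (if v ∈ e then (Real.sqrt (G.degree v))⁻¹ else 0) := by
  show (randicIncidence G * (randicIncidence G)ᴴ) u v = _
  rw [Matrix.mul_apply, Finset.sum_subtype G.edgeFinset (p := (· ∈ G.edgeSet)) (fun e => SimpleGraph.mem_edgeFinset)]
  simp only [randicIncidence, Matrix.conjTranspose_apply, star_trivial]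
  congr!

lemma M_diag (u : Fin n) (hd : 0 < G.degree u) : M G u u = 1 := by
  rw [M_apply]
  have : ∀ e ∈ G.edgeFinset,
      (if u ∈ e then (Real.sqrt (G.degree u))⁻¹ else 0) *
      (if u ∈ e then (Real.sqrt (G.degree u))⁻¹ else 0)
      = if u ∈ e then ((G.degree u : ℝ))⁻¹ else 0 := by
    intro e _
    by_cases h : u ∈ e
    · simp only [h, if_true]
      rw [← Real.sqrt_inv, Real.mul_self_sqrt (by positivity)]
    · simp [h]
  rw [Finset.sum_congr rfl this, ← Finset.sum_filter, ← G.incidenceFinset_eq_filter u,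
    Finset.sum_const, G.card_incidenceFinset_eq_degree, nsmul_eq_mul]
  have h0 : (G.degree u : ℝ) ≠ 0 := by positivity
  field_simp

lemma M_offdiag (u v : Fin n) (huv : u ≠ v) :
    M G u v = if G.Adj u v then (Real.sqrt (G.degree u))⁻¹ * (Real.sqrt (G.degree v))⁻¹ else 0 := by
  rw [M_apply]
  by_cases hadj : G.Adj u v
  · rw [Finset.sum_eq_single_of_mem s(u, v) (by simpa [SimpleGraph.mem_edgeFinset] using hadj)]
    · simp [hadj]
    · intro e he hne
      rcases Decidable.em (u ∈ e ∧ v ∈ e) with h | h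
      · exact absurd ((Sym2.mem_and_mem_iff huv).1 h) hne
      · rcases Decidable.not_and_iff_or_not.mp h with h | h <;> simp [h]
  · rw [if_neg hadj]
    apply Finset.sum_eq_zero
    intro e he
    rcases Decidable.em (u ∈ e ∧ v ∈ e) with h | h
    · exfalso
      rw [Sym2.mem_and_mem_iff huv] at h
      exact hadj (by simpa [SimpleGraph.mem_edgeFinset, h] using he)
    · rcases Decidable.not_and_iff_or_not.mp h with h | h <;> simp [h]

open SimpleGraph hiding starGraph

lemma M_symm (u v : Fin n) : M G u v = M G v u := by
  have h := Matrix.isHermitian_mul_conjTranspose_self (randicIncidence G)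
  have h2 := congrFun (congrFun h v) u
  rw [Matrix.conjTranspose_apply, star_trivial] at h2
  exact h2

lemma M_nonneg (u v : Fin n) : 0 ≤ M G u v := by
  rw [M_apply]
  apply Finset.sum_nonneg
  intro e _
  apply mul_nonneg <;> positivity

lemma M_rank_lt (hn : 0 < n) (h : G.edgeFinset.card < n) : (M G).rank < n := by
  have h1 : (M G).rank ≤ (randicIncidence G).rank := Matrix.rank_mul_le_left _ _
  have h2 : (randicIncidence G).rank ≤ Fintype.card G.edgeSet :=
    Matrix.rank_le_card_width _
  have h3 : Fintype.card G.edgeSet = G.edgeFinset.card :=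
    (SimpleGraph.edgeFinset_card (G := G)).symm
  omega

lemma M_mulVec_sqrtDegree (hd : ∀ v, 0 < G.degree v) :
    M G *ᵥ (fun v => Real.sqrt (G.degree v)) = (2:ℝ) • (fun v => Real.sqrt (G.degree v)) := by
  funext u
  have hdu : (0:ℝ) < G.degree u := by exact_mod_cast hd u
  have hsu : (0:ℝ) < Real.sqrt (G.degree u) := Real.sqrt_pos.mpr hdu
  rw [Matrix.mulVec, dotProduct]
  rw [← Finset.add_sum_erase _ _ (Finset.mem_univ u)]
  have hdiag : M G u u * Real.sqrt (G.degree u) = Real.sqrt (G.degree u) := by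
    rw [M_diag G u (hd u), one_mul]
  have hrest : ∀ v ∈ Finset.univ.erase u,
      M G u v * Real.sqrt (G.degree v)
        = if G.Adj u v then (Real.sqrt (G.degree u))⁻¹ else 0 := by
    intro v hv
    have hne : u ≠ v := (Finset.mem_erase.mp hv).1.symm
    rw [M_offdiag G u v hne]
    by_cases hadj : G.Adj u v
    · have hdv : (0:ℝ) < G.degree v := by exact_mod_cast hd v
      have hsv : (0:ℝ) < Real.sqrt (G.degree v) := Real.sqrt_pos.mpr hdv
      rw [if_pos hadj, if_pos hadj]
      field_simp
    · rw [if_neg hadj, if_neg hadj, zero_mul]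
  rw [Finset.sum_congr rfl hrest, ← Finset.sum_filter]
  have hfil : (Finset.univ.erase u).filter (fun v => G.Adj u v) = G.neighborFinset u := by
    ext w
    simp only [Finset.mem_filter, Finset.mem_erase, Finset.mem_univ, true_and, and_true,
      SimpleGraph.mem_neighborFinset]
    constructor
    · rintro ⟨-, h⟩; exact h
    · intro h; exact ⟨h.ne', h⟩
  rw [hfil, Finset.sum_const, SimpleGraph.card_neighborFinset_eq_degree, nsmul_eq_mul, hdiag]
  have : (G.degree u : ℝ) * (Real.sqrt (G.degree u))⁻¹ = Real.sqrt (G.degree u) := by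
    rw [← Real.mul_self_sqrt hdu.le]
    field_simp
    rw [Real.sqrt_sq hsu.le]
  rw [this]
  simp only [Pi.smul_apply, smul_eq_mul]
  ring

variable {m : ℕ} (hm : 0 < m)

lemma star_adj (i j : Fin m) :
    (starGraph m).Adj i j ↔ i ≠ j ∧ (i = ⟨0, hm⟩ ∨ j = ⟨0, hm⟩) := by
  show (i ≠ j ∧ (i.val = 0 ∨ j.val = 0)) ↔ _
  rw [Fin.ext_iff, Fin.ext_iff]

lemma star_degree_center : (starGraph m).degree ⟨0, hm⟩ = m - 1 := by
  have h : (starGraph m).neighborFinset ⟨0, hm⟩ = {(⟨0, hm⟩ : Fin m)}ᶜ := by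
    ext w
    simp only [SimpleGraph.mem_neighborFinset, star_adj hm, Finset.mem_compl,
      Finset.mem_singleton]
    aesop
  rw [← SimpleGraph.card_neighborFinset_eq_degree, h, Finset.card_compl,
    Finset.card_singleton, Fintype.card_fin]

lemma star_degree_leaf (v : Fin m) (hv : v ≠ ⟨0, hm⟩) : (starGraph m).degree v = 1 := by
  have h : (starGraph m).neighborFinset v = {(⟨0, hm⟩ : Fin m)} := by
    ext w
    simp only [SimpleGraph.mem_neighborFinset, star_adj hm, Finset.mem_singleton]
    constructor
    · rintro ⟨h1, h2 | h2⟩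
      · exact absurd h2 hv
      · exact h2
    · rintro rfl
      exact ⟨hv, Or.inr rfl⟩
  rw [← SimpleGraph.card_neighborFinset_eq_degree, h, Finset.card_singleton]

lemma star_degree_pos (hm2 : 2 ≤ m) (v : Fin m) : 0 < (starGraph m).degree v := by
  have hm : 0 < m := by omega
  rcases eq_or_ne v ⟨0, hm⟩ with rfl | hv
  · rw [star_degree_center hm]; omega
  · rw [star_degree_leaf hm v hv]; omega

lemma star_edge_card (hm2 : 2 ≤ m) : (starGraph m).edgeFinset.card = m - 1 := by
  have hm : 0 < m := by omega
  have hsum := SimpleGraph.sum_degrees_eq_twice_card_edges (starGraph m)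
  rw [← Finset.add_sum_erase _ _ (Finset.mem_univ (⟨0, hm⟩ : Fin m)), star_degree_center hm]
    at hsum
  have h1 : ∀ v ∈ Finset.univ.erase (⟨0, hm⟩ : Fin m), (starGraph m).degree v = 1 := by
    intro v hv
    exact star_degree_leaf hm v (Finset.mem_erase.mp hv).1
  rw [Finset.sum_congr rfl h1, Finset.sum_const, Finset.card_erase_of_mem (Finset.mem_univ _),
    Finset.card_univ, Fintype.card_fin, smul_eq_mul, mul_one] at hsum
  omega

lemma iso_star_of_center (hT : T.IsTree) (hm2 : 2 ≤ n) {c : Fin n}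
    (hc : ∀ w, w ≠ c → T.Adj c w) : Nonempty (T ≃g starGraph n) := by
  have hn : 0 < n := by omega
  have hadj : ∀ x y, T.Adj x y ↔ x ≠ y ∧ (x = c ∨ y = c) := by
    intro x y
    constructor
    · intro h
      refine ⟨h.ne, ?_⟩
      by_contra hcon
      push_neg at hcon
      obtain ⟨hx, hy⟩ := hcon
      -- two paths from x to y
      have hcx : T.Adj x c := (hc x hx).symm
      have hcy : T.Adj c y := hc y hy
      have huniq := hT.existsUnique_path x y
      have hp1 : (SimpleGraph.Walk.cons h SimpleGraph.Walk.nil).IsPath := by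
        simp [SimpleGraph.Walk.cons_isPath_iff, h.ne]
      have w1 : x ≠ c := hx
      have w2 : c ≠ y := (hc y hy).ne
      have w3 : x ≠ y := h.ne
      have hp2 : (SimpleGraph.Walk.cons hcx (SimpleGraph.Walk.cons hcy
          SimpleGraph.Walk.nil)).IsPath := by
        simp [SimpleGraph.Walk.cons_isPath_iff]
        tauto
      have := congrArg SimpleGraph.Walk.length (huniq.unique hp1 hp2)
      simp [SimpleGraph.Walk.length_cons] at this
    · rintro ⟨hxy, rfl | rfl⟩
      · exact hc _ (Ne.symm hxy)
      · exact (hc _ hxy).symm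
  refine ⟨⟨Equiv.swap c ⟨0, hn⟩, ?_⟩⟩
  intro x y
  rw [star_adj hn, hadj x y]
  rw [Equiv.swap_apply_eq_iff, Equiv.swap_apply_eq_iff, Equiv.swap_apply_right]
  constructor
  · rintro ⟨h1, h2⟩
    exact ⟨fun hh => h1 (by rw [hh]), h2⟩
  · rintro ⟨h1, h2⟩
    exact ⟨fun hh => h1 (Equiv.injective _ hh), h2⟩

lemma star_M_apply (hm2 : 2 ≤ m) (u v : Fin m) :
    M (starGraph m) u v = if u = v then 1 else
      (if u = ⟨0, by omega⟩ ∨ v = ⟨0, by omega⟩ then (Real.sqrt ((m:ℝ)-1))⁻¹ else 0) := by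
  have hm : 0 < m := by omega
  have hcast : ((m - 1 : ℕ) : ℝ) = (m:ℝ) - 1 := by
    push_cast [Nat.cast_sub (by omega : 1 ≤ m)]
    ring
  rcases eq_or_ne u v with rfl | huv
  · rw [if_pos rfl, M_diag _ u (star_degree_pos hm2 u)]
  · rw [if_neg huv, M_offdiag _ u v huv]
    simp only [star_adj hm]
    by_cases h : u = (⟨0, hm⟩ : Fin m) ∨ v = (⟨0, hm⟩ : Fin m)
    · rw [if_pos ⟨huv, h⟩, if_pos h]
      rcases h with rfl | rfl
      · rw [star_degree_center hm, star_degree_leaf hm v (Ne.symm huv), hcast]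
        simp
      · rw [star_degree_center hm, star_degree_leaf hm u huv, hcast]
        simp [mul_comm]
    · rw [if_neg (fun hh => h hh.2), if_neg h]

lemma star_trace_sq (hm2 : 2 ≤ m) :
    (M (starGraph m) * M (starGraph m)).trace = (m:ℝ) + 2 := by
  have hm : 0 < m := by omega
  set c : Fin m := ⟨0, hm⟩ with hc
  set t : ℝ := (Real.sqrt ((m:ℝ)-1))⁻¹ with ht
  have hm1 : (0:ℝ) < (m:ℝ) - 1 := by
    have : (2:ℝ) ≤ m := by exact_mod_cast hm2
    linarith
  have ht2 : t^2 = ((m:ℝ)-1)⁻¹ := by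
    rw [ht, ← Real.sqrt_inv, Real.sq_sqrt (by positivity)]
  have hsq : ∀ u v, M (starGraph m) u v * M (starGraph m) v u = (M (starGraph m) u v)^2 := by
    intro u v
    rw [← M_symm (starGraph m) u v, sq]
  have hdiag : ∀ u, (M (starGraph m) * M (starGraph m)) u u
      = ∑ v, (M (starGraph m) u v)^2 := by
    intro u
    rw [Matrix.mul_apply]
    exact Finset.sum_congr rfl fun v _ => hsq u v
  have hrowc : ∑ v, (M (starGraph m) c v)^2 = 2 := by
    rw [← Finset.add_sum_erase _ _ (Finset.mem_univ c)]
    have h1 : (M (starGraph m) c c)^2 = 1 := by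
      rw [star_M_apply hm hm2, if_pos rfl]; norm_num
    have h2 : ∀ v ∈ Finset.univ.erase c, (M (starGraph m) c v)^2 = t^2 := by
      intro v hv
      have hvc : v ≠ c := (Finset.mem_erase.mp hv).1
      rw [star_M_apply hm hm2, if_neg (Ne.symm hvc), if_pos (Or.inl rfl)]
    rw [h1, Finset.sum_congr rfl h2, Finset.sum_const, Finset.card_erase_of_mem
      (Finset.mem_univ _), Finset.card_univ, Fintype.card_fin, nsmul_eq_mul, ht2]
    have : ((m - 1 : ℕ) : ℝ) = (m:ℝ) - 1 := by
      push_cast [Nat.cast_sub (by omega : 1 ≤ m)]; ring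
    rw [this]
    field_simp
    norm_num
  have hrow : ∀ u, u ≠ c → ∑ v, (M (starGraph m) u v)^2 = 1 + t^2 := by
    intro u hu
    rw [← Finset.add_sum_erase _ _ (Finset.mem_univ u)]
    have h1 : (M (starGraph m) u u)^2 = 1 := by
      rw [star_M_apply hm hm2, if_pos rfl]; norm_num
    have h2 : ∀ v ∈ Finset.univ.erase u, (M (starGraph m) u v)^2
        = if v = c then t^2 else 0 := by
      intro v hv
      have hvu : v ≠ u := (Finset.mem_erase.mp hv).1
      rw [star_M_apply hm hm2, if_neg (Ne.symm hvu)]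
      rcases eq_or_ne v c with rfl | hvc
      · rw [if_pos (Or.inr rfl), if_pos rfl]
      · rw [if_neg (by tauto), if_neg hvc]
        norm_num
    rw [h1, Finset.sum_congr rfl h2, Finset.sum_ite_eq' (Finset.univ.erase u) c]
    rw [if_pos (Finset.mem_erase.mpr ⟨Ne.symm hu, Finset.mem_univ _⟩)]
  have htr : (M (starGraph m) * M (starGraph m)).trace
      = ∑ u, ∑ v, (M (starGraph m) u v)^2 := by
    rw [Matrix.trace]
    simp only [Matrix.diag]
    exact Finset.sum_congr rfl fun u _ => hdiag u
  rw [htr, ← Finset.add_sum_erase _ _ (Finset.mem_univ c), hrowc,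
    Finset.sum_congr rfl (fun u hu => hrow u (Finset.mem_erase.mp hu).1),
    Finset.sum_const, Finset.card_erase_of_mem (Finset.mem_univ _), Finset.card_univ,
    Fintype.card_fin, nsmul_eq_mul, ht2]
  have : ((m - 1 : ℕ) : ℝ) = (m:ℝ) - 1 := by
    push_cast [Nat.cast_sub (by omega : 1 ≤ m)]; ring
  rw [this]
  field_simp
  ring

lemma trace_M (hd : ∀ v, 0 < G.degree v) : (M G).trace = (n:ℝ) := by
  rw [Matrix.trace]
  simp only [Matrix.diag]
  rw [Finset.sum_congr rfl (fun u _ => M_diag G u (hd u))]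
  simp



variable {n : ℕ} {A : Matrix (Fin n) (Fin n) ℝ} (hA : A.IsHermitian)

lemma unit_mul_star : (hA.eigenvectorUnitary : Matrix (Fin n) (Fin n) ℝ) *
    (star hA.eigenvectorUnitary : Matrix (Fin n) (Fin n) ℝ) = 1 :=
  Matrix.mem_unitaryGroup_iff.mp hA.eigenvectorUnitary.2

lemma star_mul_unit : (star hA.eigenvectorUnitary : Matrix (Fin n) (Fin n) ℝ) *
    (hA.eigenvectorUnitary : Matrix (Fin n) (Fin n) ℝ) = 1 :=
  Matrix.mem_unitaryGroup_iff'.mp hA.eigenvectorUnitary.2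

lemma spectral_real :
    A = (hA.eigenvectorUnitary : Matrix (Fin n) (Fin n) ℝ) * Matrix.diagonal hA.eigenvalues *
      (star hA.eigenvectorUnitary : Matrix (Fin n) (Fin n) ℝ) := by
  have := hA.spectral_theorem
  simpa using this

lemma conj_mul_conj (X Y : Matrix (Fin n) (Fin n) ℝ) :
    ((hA.eigenvectorUnitary : Matrix (Fin n) (Fin n) ℝ) * X *
        (star hA.eigenvectorUnitary : Matrix (Fin n) (Fin n) ℝ)) *
      ((hA.eigenvectorUnitary : Matrix (Fin n) (Fin n) ℝ) * Y *
        (star hA.eigenvectorUnitary : Matrix (Fin n) (Fin n) ℝ))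
    = (hA.eigenvectorUnitary : Matrix (Fin n) (Fin n) ℝ) * (X * Y) *
        (star hA.eigenvectorUnitary : Matrix (Fin n) (Fin n) ℝ) := by
  simp only [Matrix.mul_assoc]
  rw [← Matrix.mul_assoc (star hA.eigenvectorUnitary : Matrix (Fin n) (Fin n) ℝ)
    (hA.eigenvectorUnitary : Matrix (Fin n) (Fin n) ℝ), star_mul_unit hA, Matrix.one_mul]

lemma det_sub_smul_one (t : ℝ) :
    Matrix.det (A - t • 1) = ∏ i, (hA.eigenvalues i - t) := by
  set U := (hA.eigenvectorUnitary : Matrix (Fin n) (Fin n) ℝ)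
  set Us := (star hA.eigenvectorUnitary : Matrix (Fin n) (Fin n) ℝ)
  have h1 : A - t • 1 = U * (Matrix.diagonal hA.eigenvalues - t • 1) * Us := by
    rw [Matrix.mul_sub, Matrix.sub_mul]
    rw [← spectral_real hA]
    congr 1
    rw [Matrix.mul_smul, Matrix.smul_mul, Matrix.mul_one, unit_mul_star hA]
  rw [h1, Matrix.det_mul, Matrix.det_mul, mul_comm, ← mul_assoc, ← Matrix.det_mul,
    star_mul_unit hA, Matrix.det_one, one_mul]
  have h2 : Matrix.diagonal hA.eigenvalues - t • (1 : Matrix (Fin n) (Fin n) ℝ)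
      = Matrix.diagonal (fun i => hA.eigenvalues i - t) := by
    ext i j
    rcases eq_or_ne i j with rfl | hij
    · simp
    · simp [Matrix.one_apply_ne hij, Matrix.diagonal_apply_ne _ hij]
  rw [h2, Matrix.det_diagonal]

lemma exists_eigenvalue_of_mulVec {t : ℝ} {x : Fin n → ℝ} (hx : x ≠ 0)
    (hAx : A *ᵥ x = t • x) : ∃ i, hA.eigenvalues i = t := by
  have hdet : Matrix.det (A - t • 1) = 0 := by
    rw [← Matrix.exists_mulVec_eq_zero_iff]
    refine ⟨x, hx, ?_⟩
    rw [Matrix.sub_mulVec, hAx, Matrix.smul_mulVec, Matrix.one_mulVec, sub_self]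
  rw [det_sub_smul_one hA t] at hdet
  rcases Finset.prod_eq_zero_iff.mp hdet with ⟨i, _, hi⟩
  exact ⟨i, by linarith [sub_eq_zero.mp hi]⟩

lemma exists_eigenvalue_zero (hrank : A.rank < n) : ∃ i, hA.eigenvalues i = 0 := by
  by_contra h
  push_neg at h
  have hdet : A.det ≠ 0 := by
    rw [hA.det_eq_prod_eigenvalues]
    exact Finset.prod_ne_zero_iff.mpr fun i _ => h i
  have : A.rank = n := by
    have := Matrix.rank_of_isUnit A (Matrix.isUnit_iff_isUnit_det A |>.mpr (isUnit_iff_ne_zero.mpr hdet))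
    simpa using this
  omega

lemma trace_eq_sum_eigenvalues : A.trace = ∑ i, hA.eigenvalues i := by
  conv_lhs => rw [spectral_real hA]
  rw [Matrix.trace_mul_cycle, star_mul_unit hA, Matrix.one_mul, Matrix.trace_diagonal]

lemma sq_spectral : A * A = (hA.eigenvectorUnitary : Matrix (Fin n) (Fin n) ℝ) *
    Matrix.diagonal (fun i => hA.eigenvalues i ^ 2) *
      (star hA.eigenvectorUnitary : Matrix (Fin n) (Fin n) ℝ) := by
  have h := conj_mul_conj hA (Matrix.diagonal hA.eigenvalues) (Matrix.diagonal hA.eigenvalues)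
  rw [← spectral_real hA, Matrix.diagonal_mul_diagonal] at h
  rw [h]
  have : (fun i => hA.eigenvalues i * hA.eigenvalues i) = fun i => hA.eigenvalues i ^ 2 := by
    funext i; ring
  rw [this]

lemma trace_sq_eq_sum_sq : (A * A).trace = ∑ i, hA.eigenvalues i ^ 2 := by
  rw [sq_spectral hA, Matrix.trace_mul_cycle, star_mul_unit hA, Matrix.one_mul,
    Matrix.trace_diagonal]

lemma cube_spectral : A * (A * A) = (hA.eigenvectorUnitary : Matrix (Fin n) (Fin n) ℝ) *
    Matrix.diagonal (fun i => hA.eigenvalues i ^ 3) *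
      (star hA.eigenvectorUnitary : Matrix (Fin n) (Fin n) ℝ) := by
  have h := conj_mul_conj hA (Matrix.diagonal hA.eigenvalues)
    (Matrix.diagonal (fun i => hA.eigenvalues i ^ 2))
  rw [← spectral_real hA, ← sq_spectral hA, Matrix.diagonal_mul_diagonal] at h
  rw [h]
  have : (fun i => hA.eigenvalues i * hA.eigenvalues i ^ 2) = fun i => hA.eigenvalues i ^ 3 := by
    funext i; ring
  rw [this]

lemma cube_vanish (h : ∀ i, hA.eigenvalues i ^ 3 - 3 * hA.eigenvalues i ^ 2
    + 2 * hA.eigenvalues i = 0) :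
    A * (A * A) - (3:ℝ) • (A * A) + (2:ℝ) • A = 0 := by
  set U := (hA.eigenvectorUnitary : Matrix (Fin n) (Fin n) ℝ) with hU
  set Us := (star hA.eigenvectorUnitary : Matrix (Fin n) (Fin n) ℝ) with hUs
  set μ := hA.eigenvalues with hμ
  have h3 : A * (A * A) = U * Matrix.diagonal (fun i => μ i ^ 3) * Us := cube_spectral hA
  have h2 : A * A = U * Matrix.diagonal (fun i => μ i ^ 2) * Us := sq_spectral hA
  have h1 : A = U * Matrix.diagonal μ * Us := spectral_real hA
  rw [h3, h2, h1]
  have lin : ∀ X Y Z : Matrix (Fin n) (Fin n) ℝ,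
      U * X * Us - (3:ℝ) • (U * Y * Us) + (2:ℝ) • (U * Z * Us)
        = U * (X - (3:ℝ) • Y + (2:ℝ) • Z) * Us := by
    intro X Y Z
    symm
    rw [Matrix.mul_add, Matrix.mul_sub, Matrix.add_mul, Matrix.sub_mul,
      Matrix.mul_smul, Matrix.smul_mul, Matrix.mul_smul, Matrix.smul_mul]
  rw [lin]
  have hz : Matrix.diagonal (fun i => μ i ^ 3)
      - (3:ℝ) • Matrix.diagonal (fun i => μ i ^ 2)
      + (2:ℝ) • Matrix.diagonal μ = 0 := by
    rw [← Matrix.diagonal_smul, ← Matrix.diagonal_smul, Matrix.diagonal_sub, Matrix.diagonal_add]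
    ext i j
    rcases eq_or_ne i j with rfl | hij
    · simp only [Matrix.diagonal_apply_eq, Matrix.zero_apply, Pi.smul_apply, smul_eq_mul]
      linarith [h i]
    · simp [Matrix.diagonal_apply_ne _ hij]
  rw [hz, Matrix.mul_zero, Matrix.zero_mul]



variable {n : ℕ} {T : SimpleGraph (Fin n)}

/-- the "bad configuration": a path on 4 distinct vertices -/
def Config (T : SimpleGraph (Fin n)) : Prop :=
  ∃ u a b v : Fin n, T.Adj u a ∧ T.Adj a b ∧ T.Adj b v ∧ u ≠ b ∧ a ≠ v ∧ u ≠ v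

lemma degree_pos (hT : T.Connected) (hn : 2 ≤ n) (v : Fin n) : 0 < T.degree v := by
  obtain ⟨w, hw⟩ := Fintype.exists_ne_of_one_lt_card (by simp; omega) v
  obtain ⟨p⟩ := hT.preconnected v w
  cases p with
  | nil => exact absurd rfl hw
  | cons h q => exact T.degree_pos_iff_exists_adj v |>.mpr ⟨_, h⟩

lemma config_props (hT : T.IsTree) {u a b v : Fin n} (hua : T.Adj u a) (hab : T.Adj a b)
    (hbv : T.Adj b v) (hub : u ≠ b) (hav : a ≠ v) (huv : u ≠ v) :
    ¬ T.Adj u v ∧ ∀ w, ¬ (T.Adj u w ∧ T.Adj w v) := by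
  have huniq := hT.existsUnique_path u v
  have hne1 : u ≠ a := hua.ne
  have hne2 : a ≠ b := hab.ne
  have hne3 : b ≠ v := hbv.ne
  have hp1 : (Walk.cons hua (Walk.cons hab (Walk.cons hbv Walk.nil))).IsPath := by
    simp [Walk.cons_isPath_iff]
    tauto
  constructor
  · intro h
    have hp2 : (Walk.cons h Walk.nil).IsPath := by simp [Walk.cons_isPath_iff]; tauto
    have := (huniq.unique hp1 hp2)
    have := congrArg Walk.length this
    simp [Walk.length_cons] at this
  · rintro w ⟨huw, hwv⟩
    have hwu : w ≠ u := huw.ne'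
    have hwv' : w ≠ v := hwv.ne
    have hp2 : (Walk.cons huw (Walk.cons hwv Walk.nil)).IsPath := by
      simp [Walk.cons_isPath_iff]
      tauto
    have := (huniq.unique hp1 hp2)
    have := congrArg Walk.length this
    simp [Walk.length_cons] at this

lemma center_of_leaf (hT : T.IsTree) (hn : 2 ≤ n) (hnc : ¬ Config T) {l c : Fin n}
    (hlc : T.Adj l c) (hleaf : ∀ w, T.Adj l w → w = c) :
    ∀ w, w ≠ c → T.Adj c w := by
  intro w hw
  obtain ⟨p⟩ := hT.isConnected.preconnected c w
  have hp := p.toPath.2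
  set q := (p.toPath : T.Walk c w) with hq
  clear_value q
  clear hq p
  cases q with
  | nil => exact absurd rfl hw
  | cons h1 q2 =>
    rename_i x
    cases q2 with
    | nil => exact h1
    | cons h2 q3 =>
      rename_i y
      exfalso
      apply hnc
      -- config l - c - x - y
      refine ⟨l, c, x, y, hlc, h1, h2, ?_, ?_, ?_⟩
      · -- l ≠ x
        intro hlx
        subst hlx
        have := hleaf y h2
        subst this
        -- then c appears twice in the path
        rw [Walk.cons_isPath_iff] at hp
        exact hp.2 (by simp)
      · -- c ≠ y
        intro hcy
        subst hcy
        rw [Walk.cons_isPath_iff] at hp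
        exact hp.2 (by simp)
      · -- l ≠ y
        intro hly
        subst hly
        have := hleaf x h2.symm
        subst this
        rw [Walk.cons_isPath_iff] at hp
        exact hp.2 (by simp)

lemma exists_center (hT : T.IsTree) (hn : 2 ≤ n) (hnc : ¬ Config T) :
    ∃ c : Fin n, ∀ w, w ≠ c → T.Adj c w := by
  -- get an edge
  have ha : ∃ a : Fin n, True := ⟨⟨0, by omega⟩, trivial⟩
  obtain ⟨a, -⟩ := ha
  have hd := degree_pos hT.isConnected hn a
  obtain ⟨b, hab⟩ := (T.degree_pos_iff_exists_adj a).mp hd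
  by_cases hla : ∀ w, T.Adj a w → w = b
  · exact ⟨b, center_of_leaf hT hn hnc hab hla⟩
  · push_neg at hla
    obtain ⟨u, hau, hub⟩ := hla
    -- claim : b is a leaf, with neighbor a
    have hlb : ∀ w, T.Adj b w → w = a := by
      intro v hbv
      by_contra hva
      -- if v = u : triangle u a b; unique paths a → u
      rcases eq_or_ne v u with rfl | hvu
      · -- T.Adj u a, T.Adj a b, T.Adj b u : two paths from a to v
        have huniq := hT.existsUnique_path a v
        have hp1 : (Walk.cons hau Walk.nil).IsPath := by
          simp [Walk.cons_isPath_iff, hau.ne]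
        have w1 : a ≠ b := hab.ne
        have w2 : b ≠ v := hbv.ne
        have w3 : a ≠ v := hau.ne
        have hp2 : (Walk.cons hab (Walk.cons hbv Walk.nil)).IsPath := by
          simp [Walk.cons_isPath_iff]
          tauto
        have := congrArg Walk.length (huniq.unique hp1 hp2)
        simp [Walk.length_cons] at this
      · -- config u - a - b - v
        exact absurd ⟨u, a, b, v, hau.symm, hab, hbv, hub, fun h => hva h.symm, fun h => hvu h.symm⟩ hnc
    exact ⟨a, center_of_leaf hT hn hnc hab.symm hlb⟩



abbrev hMat {k : ℕ} (G : SimpleGraph (Fin k)) : (M G).IsHermitian :=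
  Matrix.isHermitian_mul_conjTranspose_self (randicIncidence G)

lemma energy_eq {k : ℕ} (G : SimpleGraph (Fin k)) :
    randicIncidenceEnergy G = ∑ i, Real.sqrt ((hMat G).eigenvalues i) := rfl

lemma sum_split {k : ℕ} {i0 j0 : Fin k} (hne : i0 ≠ j0) (f : Fin k → ℝ) :
    ∑ i, f i = f i0 + (f j0 + ∑ k ∈ (Finset.univ.erase i0).erase j0, f k) := by
  rw [Finset.add_sum_erase _ f (Finset.mem_erase.mpr ⟨hne.symm, Finset.mem_univ j0⟩),
    Finset.add_sum_erase _ f (Finset.mem_univ i0)]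

lemma card_split {k : ℕ} {i0 j0 : Fin k} (hne : i0 ≠ j0) :
    ((Finset.univ.erase i0).erase j0).card = k - 2 := by
  rw [Finset.card_erase_of_mem (Finset.mem_erase.mpr ⟨hne.symm, Finset.mem_univ j0⟩),
    Finset.card_erase_of_mem (Finset.mem_univ i0), Finset.card_univ, Fintype.card_fin]
  omega

lemma energy_analysis {k : ℕ} (G : SimpleGraph (Fin k)) (hn : 2 ≤ k)
    (hd : ∀ v, 0 < G.degree v) (hedge : G.edgeFinset.card < k) :
    ∃ i0 j0 : Fin k, i0 ≠ j0 ∧ (hMat G).eigenvalues i0 = 0 ∧ (hMat G).eigenvalues j0 = 2 := by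
  obtain ⟨i0, hi0⟩ := exists_eigenvalue_zero (hMat G) (M_rank_lt G (by omega) hedge)
  have hx : (fun v => Real.sqrt (G.degree v)) ≠ 0 := by
    intro h
    have := congrFun h ⟨0, by omega⟩
    simp only [Pi.zero_apply] at this
    have hd0 : (0:ℝ) < (G.degree ⟨0, by omega⟩ : ℝ) := by exact_mod_cast hd _
    exact absurd this (ne_of_gt (Real.sqrt_pos.mpr hd0))
  obtain ⟨j0, hj0⟩ := exists_eigenvalue_of_mulVec (hMat G) hx (M_mulVec_sqrtDegree G hd)
  refine ⟨i0, j0, ?_, hi0, hj0⟩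
  intro h
  rw [h, hj0] at hi0
  norm_num at hi0

lemma star_energy {m : ℕ} (hm2 : 2 ≤ m) :
    randicIncidenceEnergy (starGraph m) = (m:ℝ) - 2 + Real.sqrt 2 := by
  have hd := star_degree_pos hm2
  have hedge : (starGraph m).edgeFinset.card < m := by
    rw [star_edge_card hm2]; omega
  obtain ⟨i0, j0, hij, h0, h2⟩ := energy_analysis (starGraph m) hm2 hd hedge
  set μ := (hMat (starGraph m)).eigenvalues with hμ
  set s := (Finset.univ.erase i0).erase j0 with hs
  have hcard : s.card = m - 2 := card_split hij
  have hcardR : (s.card : ℝ) = (m:ℝ) - 2 := by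
    rw [hcard]; push_cast [Nat.cast_sub hm2]; ring
  have hsum : ∑ i, μ i = (m:ℝ) := by
    rw [← trace_eq_sum_eigenvalues (hMat (starGraph m)), trace_M _ hd]
  have hsumsq : ∑ i, μ i ^ 2 = (m:ℝ) + 2 := by
    rw [← trace_sq_eq_sum_sq (hMat (starGraph m)), star_trace_sq hm2]
  have hs1 : ∑ k ∈ s, μ k = (m:ℝ) - 2 := by
    have := sum_split hij μ
    rw [hsum, h0, h2] at this
    linarith
  have hs2 : ∑ k ∈ s, μ k ^ 2 = (m:ℝ) - 2 := by
    have := sum_split hij (fun k => μ k ^ 2)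
    simp only [h0, h2] at this
    rw [hsumsq] at this
    norm_num at this
    linarith
  have hzero : ∑ k ∈ s, (μ k - 1)^2 = 0 := by
    have he : ∀ k ∈ s, (μ k - 1)^2 = μ k^2 - 2*μ k + 1 := fun k _ => by ring
    rw [Finset.sum_congr rfl he, Finset.sum_add_distrib, Finset.sum_sub_distrib,
      hs2, Finset.sum_const, nsmul_eq_mul, mul_one, hcardR, ← Finset.mul_sum, hs1]
    ring
  have hone : ∀ k ∈ s, μ k = 1 := by
    intro k hk
    have h := (Finset.sum_eq_zero_iff_of_nonneg (fun k _ => sq_nonneg _)).mp hzero k hk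
    have := pow_eq_zero_iff (n := 2) (by norm_num) |>.mp h
    linarith [sub_eq_zero.mp this]
  rw [energy_eq, sum_split hij (fun i => Real.sqrt (μ i)), h0, h2, Real.sqrt_zero]
  have : ∑ k ∈ s, Real.sqrt (μ k) = ∑ k ∈ s, 1 := by
    apply Finset.sum_congr rfl
    intro k hk
    rw [hone k hk, Real.sqrt_one]
  rw [this, Finset.sum_const, nsmul_eq_mul, mul_one, hcardR]
  ring

end StarProof

open StarProof in
theorem star_unique_max_randicIncidenceEnergy {n : ℕ} (hn : 2 ≤ n)
    (T : SimpleGraph (Fin n)) (hT : T.IsTree)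
    (hnotstar : ¬ Nonempty (T ≃g starGraph n)) :
    randicIncidenceEnergy T < randicIncidenceEnergy (starGraph n) ∧
      randicIncidenceEnergy (starGraph n) = (n : ℝ) - 2 + Real.sqrt 2 := by
  have hstar := star_energy hn
  refine ⟨?_, hstar⟩
  have hd : ∀ v, 0 < T.degree v := degree_pos hT.isConnected hn
  have hedge : T.edgeFinset.card < n := by
    have := hT.card_edgeFinset
    rw [Fintype.card_fin] at this
    omega
  obtain ⟨i0, j0, hij, h0, h2⟩ := energy_analysis T hn hd hedge
  set μ := (hMat T).eigenvalues with hμ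
  set s := (Finset.univ.erase i0).erase j0 with hs
  have hcard : s.card = n - 2 := card_split hij
  have hcardR : (s.card : ℝ) = (n:ℝ) - 2 := by
    rw [hcard]; push_cast [Nat.cast_sub hn]; ring
  have hsum : ∑ i, μ i = (n:ℝ) := by
    rw [← trace_eq_sum_eigenvalues (hMat T), trace_M _ hd]
  have hs1 : ∑ k ∈ s, μ k = (n:ℝ) - 2 := by
    have := sum_split hij μ
    rw [hsum, h0, h2] at this
    linarith
  have hnn : ∀ i, 0 ≤ μ i :=
    Matrix.eigenvalues_self_mul_conjTranspose_nonneg (randicIncidence T)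
  have hb : ∀ k ∈ s, Real.sqrt (μ k) ≤ (μ k + 1)/2 := by
    intro k _
    nlinarith [Real.sq_sqrt (hnn k), Real.sqrt_nonneg (μ k), sq_nonneg (Real.sqrt (μ k) - 1)]
  have hsplit := sum_split hij (fun i => Real.sqrt (μ i))
  rw [h0, h2, Real.sqrt_zero, zero_add] at hsplit
  have hhalf : ∑ k ∈ s, (μ k + 1)/2 = (n:ℝ) - 2 := by
    rw [← Finset.sum_div, Finset.sum_add_distrib, hs1, Finset.sum_const, nsmul_eq_mul,
      mul_one, hcardR]
    ring
  by_contra hcon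
  push_neg at hcon
  rw [hstar] at hcon
  -- equality case : all remaining eigenvalues are 1
  have hone : ∀ k ∈ s, μ k = 1 := by
    have hle : ∑ k ∈ s, Real.sqrt (μ k) ≤ ∑ k ∈ s, (μ k + 1)/2 := Finset.sum_le_sum hb
    have heq : ∑ k ∈ s, Real.sqrt (μ k) = ∑ k ∈ s, (μ k + 1)/2 := by
      rw [energy_eq] at hcon
      rw [← hμ] at hcon
      rw [hsplit] at hcon
      rw [hhalf]
      linarith [hhalf]
    have hpt := (Finset.sum_eq_sum_iff_of_le hb).mp heq
    intro k hk
    have h := hpt k hk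
    have hsq := Real.sq_sqrt (hnn k)
    nlinarith [Real.sqrt_nonneg (μ k)]
  have hroots : ∀ i, μ i ^ 3 - 3 * μ i ^ 2 + 2 * μ i = 0 := by
    intro i
    rcases eq_or_ne i i0 with rfl | hi0
    · rw [h0]; ring
    rcases eq_or_ne i j0 with rfl | hj0
    · rw [h2]; norm_num
    · have : i ∈ s := Finset.mem_erase.mpr ⟨hj0, Finset.mem_erase.mpr ⟨hi0, Finset.mem_univ i⟩⟩
      rw [hone i this]; ring
  have Meq := cube_vanish (hMat T) hroots
  by_cases hcfg : Config T
  · obtain ⟨u, a, b, v, hua, hab, hbv, hub, hav, huv⟩ := hcfg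
    obtain ⟨hnadj, hnocom⟩ := config_props hT hua hab hbv hub hav huv
    have hMuv : M T u v = 0 := by rw [M_offdiag T u v huv, if_neg hnadj]
    have hM2uv : (M T * M T) u v = 0 := by
      rw [Matrix.mul_apply]
      apply Finset.sum_eq_zero
      intro w _
      rcases eq_or_ne w u with rfl | hwu
      · rw [hMuv, mul_zero]
      rcases eq_or_ne w v with rfl | hwv
      · rw [hMuv, zero_mul]
      by_cases hadj : T.Adj u w
      · have hno : ¬ T.Adj w v := fun hc => hnocom w ⟨hadj, hc⟩
        rw [M_offdiag T w v hwv, if_neg hno, mul_zero]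
      · rw [M_offdiag T u w hwu.symm, if_neg hadj, zero_mul]
    have hMMnn : ∀ x y, 0 ≤ (M T * M T) x y := by
      intro x y
      rw [Matrix.mul_apply]
      exact Finset.sum_nonneg fun w _ => mul_nonneg (M_nonneg T x w) (M_nonneg T w y)
    have hpos_adj : ∀ x y, T.Adj x y → 0 < M T x y := by
      intro x y h
      rw [M_offdiag T x y h.ne, if_pos h]
      have h1 : (0:ℝ) < (T.degree x : ℝ) := by exact_mod_cast hd x
      have h2' : (0:ℝ) < (T.degree y : ℝ) := by exact_mod_cast hd y
      have := Real.sqrt_pos.mpr h1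
      have := Real.sqrt_pos.mpr h2'
      positivity
    have hav' : 0 < (M T * M T) a v := by
      rw [Matrix.mul_apply]
      exact Finset.sum_pos' (fun w _ => mul_nonneg (M_nonneg T a w) (M_nonneg T w v))
        ⟨b, Finset.mem_univ b, mul_pos (hpos_adj a b hab) (hpos_adj b v hbv)⟩
    have hcube : 0 < (M T * (M T * M T)) u v := by
      rw [Matrix.mul_apply]
      exact Finset.sum_pos' (fun w _ => mul_nonneg (M_nonneg T u w) (hMMnn w v))
        ⟨a, Finset.mem_univ a, mul_pos (hpos_adj u a hua) hav'⟩
    have hent := congrFun (congrFun Meq u) v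
    simp only [Matrix.sub_apply, Matrix.add_apply, Matrix.smul_apply, Matrix.zero_apply,
      smul_eq_mul, hMuv, hM2uv, mul_zero] at hent
    linarith
  · obtain ⟨c, hc⟩ := exists_center hT hn hcfg
    exact absurd (iso_star_of_center hT hn hc) hnotstar
end
end
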